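/- arXiv:2508.00431 — 2 statements merged into one kernel-verified Lean document; each statement's English description precedes it below -/
import Mathlib

section
/- Let A be an associative ℂ-algebra (not necessarily unital), B a unital finite-dimensional ℂ-algebra, and M an A-B bimodule admitting a left coordinate system (α_i, α̌^i)_{i∈I}. Let p ∈ B be a generating idempotent of B. Then: (1) Mp = {ξp : ξ ∈ M} is an A-(pBp) bimodule admitting a left coordinate system; (2) for every symmetric linear functional φ on B, every left coordinate system (θ_j, θ̌^j)_{j∈J} of the A-(pBp) bimodule Mp, and every x ∈ A, one has Σ_{j∈J} φ(θ̌^j(x·θ_j(p))) = Σ_{i∈I} φ(α̌^i(x·α_i(1_B))) (both sums having only finitely many nonzero terms). -/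
open scoped BigOperators

universe u v w
section BasicDefs

variable (R : Type u)

section MulOnly
variable [NonUnitalRing R]

/-- An idempotent element. -/
def IsIdem (e : R) : Prop := e * e = e

/-- Two idempotents are orthogonal. -/
def OrthIdem (e f : R) : Prop := e * f = 0 ∧ f * e = 0

/-- `f ≤ e` for idempotents: `f * e = f` and `e * f = f`. -/
def SubIdem (f e : R) : Prop := f * e = f ∧ e * f = f

/-- A primitive idempotent. -/
def IsPrimIdem (e : R) : Prop :=
  IsIdem R e ∧ e ≠ 0 ∧ ∀ f : R, IsIdem R f → SubIdem R f e → f = 0 ∨ f = e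

/-- Equivalence of idempotents: partial isometries `u ∈ eRf`, `v ∈ fRe` with
`u * v = e`, `v * u = f`. -/
def IdemEquiv (e f : R) : Prop :=
  ∃ u v : R, e * u * f = u ∧ f * v * e = v ∧ u * v = e ∧ v * u = f

/-- A generating idempotent: it has a finite orthogonal primitive decomposition
    such that every primitive idempotent is equivalent to a member of it. -/
def IsGenIdem (e : R) : Prop :=
  IsIdem R e ∧ ∃ (n : ℕ) (ε : Fin n → R),
    (∀ k, IsPrimIdem R (ε k)) ∧ (∀ k l, k ≠ l → OrthIdem R (ε k) (ε l)) ∧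
    e = ∑ k, ε k ∧ ∀ p : R, IsPrimIdem R p → ∃ k, IdemEquiv R p (ε k)

/-- An idempotent of the corner algebra `fRf`. -/
def IsIdemIn (f e : R) : Prop := IsIdem R e ∧ f * e * f = e

/-- A primitive idempotent of the corner algebra `fRf`. -/
def IsPrimIdemIn (f e : R) : Prop :=
  IsIdemIn R f e ∧ e ≠ 0 ∧ ∀ g : R, IsIdemIn R f g → SubIdem R g e → g = 0 ∨ g = e

/-- Equivalence of idempotents within the corner algebra `fRf`. -/
def IdemEquivIn (f p q : R) : Prop :=
  ∃ u v : R, f * u * f = u ∧ f * v * f = v ∧ p * u * q = u ∧ q * v * p = v ∧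
    u * v = p ∧ v * u = q

/-- A generating idempotent of the corner algebra `fRf`. -/
def IsGenIdemIn (f e : R) : Prop :=
  IsIdemIn R f e ∧ ∃ (n : ℕ) (ε : Fin n → R),
    (∀ k, IsPrimIdemIn R f (ε k)) ∧ (∀ k l, k ≠ l → OrthIdem R (ε k) (ε l)) ∧
    e = ∑ k, ε k ∧ ∀ p : R, IsPrimIdemIn R f p → ∃ k, IdemEquivIn R f p (ε k)

end MulOnly

section Subspaces
variable [NonUnitalRing R] [Module ℂ R] [SMulCommClass ℂ R R] [IsScalarTower ℂ R R]

/-- The subspace `Re = {x | x * e = x}`. -/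
def subAe (e : R) : Submodule ℂ R where
  carrier := {x | x * e = x}
  add_mem' := by
    intro a b ha hb
    simp only [Set.mem_setOf_eq] at *
    rw [add_mul, ha, hb]
  zero_mem' := by simp
  smul_mem' := by
    intro c x hx
    simp only [Set.mem_setOf_eq] at *
    rw [smul_mul_assoc, hx]

/-- The corner subspace `eRf = {x | e * x * f = x}`. -/
def subCorner (e f : R) : Submodule ℂ R where
  carrier := {x | e * x * f = x}
  add_mem' := by
    intro a b ha hb
    simp only [Set.mem_setOf_eq] at *
    rw [mul_add, add_mul, ha, hb]
  zero_mem' := by simp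
  smul_mem' := by
    intro c x hx
    simp only [Set.mem_setOf_eq] at *
    rw [mul_smul_comm, smul_mul_assoc, hx]

/-- A symmetric linear functional. -/
def IsSLF (ψ : R →ₗ[ℂ] ℂ) : Prop := ∀ x y : R, ψ (x * y) = ψ (y * x)

/-- Witness data for an AUF algebra: a family of pairwise orthogonal idempotents with
finite-dimensional corners spanning the algebra. -/
def IsAUFWitness {I : Type v} (E : I → R) : Prop :=
  (∀ i, IsIdem R (E i)) ∧ (∀ i j, i ≠ j → OrthIdem R (E i) (E j)) ∧
  (∀ i j, FiniteDimensional ℂ (subCorner R (E i) (E j))) ∧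
  (⨆ i, ⨆ j, subCorner R (E i) (E j)) = ⊤

/-- An almost unital and finite-dimensional (AUF) algebra. -/
def IsAUF : Prop := ∃ (I : Type u) (E : I → R), IsAUFWitness R E

end Subspaces

end BasicDefs

section Bimodule

variable (A B M : Type*) [NonUnitalRing A] [Module ℂ A] [SMulCommClass ℂ A A]
  [IsScalarTower ℂ A A] [Ring B] [Algebra ℂ B] [AddCommGroup M] [Module ℂ M]

/-- An `A`-`B` bimodule structure on the ℂ-vector space `M`: a ℂ-bilinear associative left
`A`-action and a ℂ-bilinear associative unital right `B`-action which commute. -/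
structure BimoduleStr where
  /-- the left action of `A` -/
  l : A →ₗ[ℂ] Module.End ℂ M
  /-- the right action of `B` -/
  r : B →ₗ[ℂ] Module.End ℂ M
  l_mul : ∀ a a' : A, l (a * a') = l a ∘ₗ l a'
  r_one : r 1 = LinearMap.id
  r_mul : ∀ b b' : B, r (b * b') = r b' ∘ₗ r b
  lr_comm : ∀ (a : A) (b : B), l a ∘ₗ r b = r b ∘ₗ l a

variable {A B M}

/-- `(α i, α̌ i)_{i : I}` is a left coordinate system of the `A`-`B` bimodule `M`. -/
def IsLeftCoordSys (ρ : BimoduleStr A B M) {I : Type v}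
    (α : I → (B →ₗ[ℂ] M)) (αv : I → (M →ₗ[ℂ] B)) : Prop :=
  (∀ (i : I) (b c : B), α i (b * c) = ρ.r c (α i b)) ∧
  (∀ (i : I) (ξ : M) (b : B), αv i (ρ.r b ξ) = αv i ξ * b) ∧
  (∀ ξ : M, {i | αv i ξ ≠ 0}.Finite ∧ ∑ᶠ i, α i (αv i ξ) = ξ) ∧
  (∀ x : A, {i | ρ.l x ∘ₗ α i ≠ 0}.Finite ∧ {i | αv i ∘ₗ ρ.l x ≠ 0}.Finite)

variable (B) in
/-- The ℂ-span of commutators `[B, B]`. -/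
def commSpan : Submodule ℂ B := Submodule.span ℂ {z : B | ∃ a b : B, z = a * b - b * a}

end Bimodule

section Stmt14

variable {A B M : Type*} [NonUnitalRing A] [Module ℂ A] [SMulCommClass ℂ A A]
  [IsScalarTower ℂ A A] [Ring B] [Algebra ℂ B] [AddCommGroup M] [Module ℂ M]

/-- The subspace `Mp = {ξ | ξ·p = ξ}` of fixed points of the right action of an
idempotent `p ∈ B`. -/
def rFix (ρ : BimoduleStr A B M) (p : B) : Submodule ℂ M where
  carrier := {ξ | ρ.r p ξ = ξ}
  add_mem' := by
    intro ξ η hξ hη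
    simp only [Set.mem_setOf_eq] at *
    rw [map_add, hξ, hη]
  zero_mem' := by simp
  smul_mem' := by
    intro c ξ hξ
    simp only [Set.mem_setOf_eq] at *
    rw [map_smul, hξ]

/-- The left action of `x ∈ A` restricted to `Mp`. -/
def lRes (ρ : BimoduleStr A B M) (p : B) (x : A) :
    ↥(rFix ρ p) →ₗ[ℂ] ↥(rFix ρ p) :=
  LinearMap.restrict (ρ.l x) (fun ξ hξ => by
    have h := LinearMap.ext_iff.1 (ρ.lr_comm x p) ξ
    simp only [LinearMap.comp_apply] at h
    show ρ.r p (ρ.l x ξ) = ρ.l x ξ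
    rw [← h, show ρ.r p ξ = ξ from hξ])

/-- `(θ j, θ̌ j)_{j : J}` is a left coordinate system of the `A`-`pBp` bimodule `Mp`. -/
def IsLeftCoordSysCorner (ρ : BimoduleStr A B M) (p : B) {J : Type w}
    (θ : J → (↥(subCorner B p p) →ₗ[ℂ] ↥(rFix ρ p)))
    (θv : J → (↥(rFix ρ p) →ₗ[ℂ] ↥(subCorner B p p))) : Prop :=
  -- each θ j is right pBp-linear
  (∀ (j : J) (b c : B) (hb : b ∈ subCorner B p p) (hc : c ∈ subCorner B p p)
      (hbc : b * c ∈ subCorner B p p),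
    ((θ j ⟨b * c, hbc⟩ : M)) = ρ.r c ((θ j ⟨b, hb⟩ : M))) ∧
  -- each θ̌ j is right pBp-linear
  (∀ (j : J) (ξ : M) (hξ : ξ ∈ rFix ρ p) (c : B) (hc : c ∈ subCorner B p p)
      (hrc : ρ.r c ξ ∈ rFix ρ p),
    ((θv j ⟨ρ.r c ξ, hrc⟩ : B)) = (θv j ⟨ξ, hξ⟩ : B) * c) ∧
  -- condition (a)
  (∀ ξ : ↥(rFix ρ p), {j | θv j ξ ≠ 0}.Finite ∧
    ∑ᶠ j, ((θ j (θv j ξ) : M)) = (ξ : M)) ∧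
  -- condition (b)
  (∀ x : A, {j | (lRes ρ p x) ∘ₗ θ j ≠ 0}.Finite ∧ {j | θv j ∘ₗ (lRes ρ p x) ≠ 0}.Finite)

end Stmt14

section Decomp
variable {B : Type*} [Ring B] [Algebra ℂ B] [FiniteDimensional ℂ B]

lemma corner_strict {f g : B} (hf : IsIdem B f) (hg : IsIdem B g)
    (hsub : SubIdem B g f) (hne : g ≠ f) : subCorner B g g < subCorner B f f := by
  have hle : subCorner B g g ≤ subCorner B f f := by
    intro x hx
    have hx' : g * x * g = x := hx
    show f * x * f = x
    conv_lhs => rw [← hx']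
    rw [show f * (g * x * g) * f = (f * g) * x * (g * f) by noncomm_ring, hsub.2, hsub.1]
    exact hx'
  refine lt_of_le_of_ne hle fun heq => ?_
  have hfmem : f ∈ subCorner B f f := by
    show f * f * f = f
    rw [hf, hf]
  rw [← heq] at hfmem
  have : g * f * g = f := hfmem
  rw [hsub.1, hg] at this
  exact hne this

lemma sum_prim : ∀ (n : ℕ) (f : B), IsIdem B f →
    Module.finrank ℂ (subCorner B f f) ≤ n →
    ∃ L : List B, (∀ g ∈ L, IsPrimIdem B g) ∧ L.sum = f := by
  intro n
  induction n with
  | zero =>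
    intro f hf hrk
    rcases eq_or_ne f 0 with h0 | h0
    · exact ⟨[], by simp, by simp [h0]⟩
    · exfalso
      have hmem : f ∈ subCorner B f f := by
        show f * f * f = f
        rw [hf, hf]
      have : subCorner B f f = ⊥ := Submodule.finrank_eq_zero.mp (Nat.le_zero.mp hrk)
      rw [this] at hmem
      exact h0 hmem
  | succ n ih =>
    intro f hf hrk
    rcases eq_or_ne f 0 with h0 | h0
    · exact ⟨[], by simp, by simp [h0]⟩
    by_cases hprim : IsPrimIdem B f
    · exact ⟨[f], by simpa using hprim, by simp⟩
    have : ∃ g : B, IsIdem B g ∧ SubIdem B g f ∧ g ≠ 0 ∧ g ≠ f := by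
      by_contra hcon
      push_neg at hcon
      refine hprim ⟨hf, h0, fun g hg hsub => ?_⟩
      by_cases hg0 : g = 0
      · exact Or.inl hg0
      · exact Or.inr (hcon g hg hsub hg0)
    obtain ⟨g, hg, hsub, hg0, hgf⟩ := this
    have hh : IsIdem B (f - g) := by
      show (f - g) * (f - g) = f - g
      have := hsub.1; have := hsub.2
      rw [sub_mul, mul_sub, mul_sub, hf, hg, hsub.1, hsub.2]
      abel
    have hsubh : SubIdem B (f - g) f := by
      constructor
      · rw [sub_mul, hf, hsub.1]
      · rw [mul_sub, hf, hsub.2]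
    have hhf : f - g ≠ f := fun h => hg0 (sub_eq_self.mp h)
    have rk1 : Module.finrank ℂ (subCorner B g g) ≤ n :=
      Nat.lt_succ_iff.mp (lt_of_lt_of_le (Submodule.finrank_lt_finrank_of_lt
        (corner_strict hf hg hsub hgf)) hrk)
    have rk2 : Module.finrank ℂ (subCorner B (f - g) (f - g)) ≤ n :=
      Nat.lt_succ_iff.mp (lt_of_lt_of_le (Submodule.finrank_lt_finrank_of_lt
        (corner_strict hf hh hsubh hhf)) hrk)
    obtain ⟨L1, hL1, hs1⟩ := ih g hg rk1
    obtain ⟨L2, hL2, hs2⟩ := ih (f - g) hh rk2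
    refine ⟨L1 ++ L2, ?_, ?_⟩
    · intro x hx
      rcases List.mem_append.mp hx with h | h
      · exact hL1 x h
      · exact hL2 x h
    · rw [List.sum_append, hs1, hs2]
      abel

lemma exists_uv (p : B) (hp : IsGenIdem B p) :
    ∃ (m : ℕ) (u v : Fin m → B), (∀ s, u s * p = u s) ∧ (∀ s, p * v s = v s) ∧
      ∑ s, u s * v s = 1 := by
  obtain ⟨hpidem, n, ε, hprim, horth, hsum, hgen⟩ := hp
  obtain ⟨L, hLprim, hLsum⟩ := sum_prim (Module.finrank ℂ (subCorner B (1:B) 1)) 1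
    (show IsIdem B (1:B) from one_mul 1) le_rfl
  have hεp : ∀ k, ε k * p = ε k := by
    intro k
    rw [hsum, Finset.mul_sum, Finset.sum_eq_single k
      (fun l _ hl => (horth k l (Ne.symm hl)).1)
      (fun h => absurd (Finset.mem_univ k) h)]
    exact (hprim k).1
  have hpε : ∀ k, p * ε k = ε k := by
    intro k
    rw [hsum, Finset.sum_mul, Finset.sum_eq_single k
      (fun l _ hl => (horth l k hl).1)
      (fun h => absurd (Finset.mem_univ k) h)]
    exact (hprim k).1
  have key : ∀ t : Fin L.length, ∃ u v : B,
      u * p = u ∧ p * v = v ∧ u * v = L.get t := by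
    intro t
    obtain ⟨k, w, z, hw, hz, hwz, hzw⟩ := hgen (L.get t) (hLprim _ (by rw [List.get_eq_getElem]; exact L.getElem_mem t.isLt))
    refine ⟨w, z, ?_, ?_, hwz⟩
    · have h1 : w * p = L.get t * w * ε k * p := by rw [hw]
      rw [mul_assoc, hεp k, hw] at h1
      exact h1
    · have h2 : p * z = p * (ε k * z * L.get t) := by rw [hz]
      rw [show p * (ε k * z * L.get t) = (p * ε k) * z * L.get t by noncomm_ring,
          hpε k, hz] at h2
      exact h2
  choose u v hu hv huv using key
  refine ⟨L.length, u, v, hu, hv, ?_⟩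
  calc ∑ s, u s * v s = ∑ t : Fin L.length, L.get t :=
        Finset.sum_congr rfl fun t _ => huv t
    _ = L.sum := by simp only [List.get_eq_getElem]; exact Fin.sum_univ_getElem L
    _ = 1 := hLsum

end Decomp

section Helpers

variable {A B M : Type*} [NonUnitalRing A] [Module ℂ A] [SMulCommClass ℂ A A]
  [IsScalarTower ℂ A A] [Ring B] [Algebra ℂ B] [AddCommGroup M] [Module ℂ M]

lemma corner_pl {p b : B} (hpq : p * p = p) (hb : b ∈ subCorner B p p) : p * b = b := by
  have hb' : p * b * p = b := hb
  conv_lhs => rw [← hb']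
  rw [show p * (p * b * p) = (p * p) * b * p by noncomm_ring, hpq]
  exact hb'

lemma corner_pr {p b : B} (hpq : p * p = p) (hb : b ∈ subCorner B p p) : b * p = b := by
  have hb' : p * b * p = b := hb
  conv_lhs => rw [← hb']
  rw [show p * b * p * p = p * b * (p * p) by noncomm_ring, hpq]
  exact hb'

lemma r_mem_rFix (ρ : BimoduleStr A B M) {p c : B} (hc : c * p = c) (ξ : M) :
    ρ.r c ξ ∈ rFix ρ p := by
  show ρ.r p (ρ.r c ξ) = ρ.r c ξ
  have h := ρ.r_mul c p
  rw [hc] at h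
  exact (LinearMap.congr_fun h ξ).symm

lemma lr_apply (ρ : BimoduleStr A B M) (x : A) (b : B) (ξ : M) :
    ρ.l x (ρ.r b ξ) = ρ.r b (ρ.l x ξ) :=
  LinearMap.congr_fun (ρ.lr_comm x b) ξ

lemma lRes_coe (ρ : BimoduleStr A B M) (p : B) (x : A) (ξ : ↥(rFix ρ p)) :
    ((lRes ρ p x ξ : M)) = ρ.l x (ξ : M) := rfl

theorem trace_indep (ρ : BimoduleStr A B M) {p : B} (hpq : p * p = p)
    (hpp : p ∈ subCorner B p p)
    {J : Type*} {K : Type*}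
    (θ : J → (↥(subCorner B p p) →ₗ[ℂ] ↥(rFix ρ p)))
    (θv : J → (↥(rFix ρ p) →ₗ[ℂ] ↥(subCorner B p p)))
    (hθ : IsLeftCoordSysCorner ρ p θ θv)
    (σ : K → (↥(subCorner B p p) →ₗ[ℂ] ↥(rFix ρ p)))
    (σv : K → (↥(rFix ρ p) →ₗ[ℂ] ↥(subCorner B p p)))
    (hσ : IsLeftCoordSysCorner ρ p σ σv)
    (φ : B →ₗ[ℂ] ℂ) (hφ : IsSLF B φ) (x : A) :
    ∑ᶠ j, φ ((θv j (lRes ρ p x (θ j ⟨p, hpp⟩)) : B))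
      = ∑ᶠ k, φ ((σv k (lRes ρ p x (σ k ⟨p, hpp⟩)) : B)) := by
  classical
  obtain ⟨hθ1, hθ2, hθ3, hθ4⟩ := hθ
  obtain ⟨hσ1, hσ2, hσ3, hσ4⟩ := hσ
  set P : ↥(subCorner B p p) := ⟨p, hpp⟩ with hP
  set Jf : Finset J := (hθ4 x).2.toFinset with hJf
  set Kf : Finset K := (hσ4 x).1.toFinset with hKf
  set G : J → K → ℂ := fun j k =>
    φ ((σv k (θ j (θv j (lRes ρ p x (σ k P)))) : B)) with hG
  have hmain : ∀ (j : J) (k : K),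
      φ ((θv j (lRes ρ p x (σ k (σv k (θ j P)))) : B)) = G j k := by
    intro j k
    set ξ : ↥(rFix ρ p) := θ j P with hξ
    set c : ↥(subCorner B p p) := σv k ξ with hc
    set η : ↥(rFix ρ p) := lRes ρ p x (σ k P) with hη
    have hcp : (c : B) * p = (c : B) := corner_pr hpq c.2
    have h1 : ((σ k c : M)) = ρ.r (c : B) ((σ k P : M)) := by
      have hbc : p * (c : B) ∈ subCorner B p p := by
        rw [corner_pl hpq c.2]; exact c.2
      have h := hσ1 k p (c : B) hpp c.2 hbc
      rwa [show (⟨p * (c : B), hbc⟩ : ↥(subCorner B p p)) = c from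
        Subtype.ext (corner_pl hpq c.2)] at h
    have h2mem : ρ.r (c : B) ((η : M)) ∈ rFix ρ p := r_mem_rFix ρ hcp _
    have h2 : lRes ρ p x (σ k c) = ⟨ρ.r (c : B) ((η : M)), h2mem⟩ := by
      apply Subtype.ext
      rw [lRes_coe, h1, lr_apply]
      rfl
    set d : ↥(subCorner B p p) := θv j η with hd
    have h3 : ((θv j (lRes ρ p x (σ k c)) : B)) = (d : B) * (c : B) := by
      rw [h2]
      exact hθ2 j ((η : M)) η.2 ((c : B)) c.2 h2mem
    have hdp : ρ.r (d : B) ((ξ : M)) ∈ rFix ρ p := r_mem_rFix ρ (corner_pr hpq d.2) _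
    have h4 : ρ.r (d : B) ((θ j P : M)) = ((θ j d : M)) := by
      have hbd : p * (d : B) ∈ subCorner B p p := by
        rw [corner_pl hpq d.2]; exact d.2
      have h := hθ1 j p (d : B) hpp d.2 hbd
      rw [show (⟨p * (d : B), hbd⟩ : ↥(subCorner B p p)) = d from
        Subtype.ext (corner_pl hpq d.2)] at h
      exact h.symm
    have h5 : (c : B) * (d : B) = ((σv k (θ j d) : B)) := by
      have h := hσ2 k ((ξ : M)) ξ.2 ((d : B)) d.2 hdp
      rw [show (⟨ρ.r (d : B) ((ξ : M)), hdp⟩ : ↥(rFix ρ p)) = θ j d from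
        Subtype.ext h4] at h
      exact h.symm
    calc φ ((θv j (lRes ρ p x (σ k c)) : B))
        = φ ((d : B) * (c : B)) := by rw [h3]
      _ = φ ((c : B) * (d : B)) := hφ _ _
      _ = φ ((σv k (θ j d) : B)) := by rw [h5]
      _ = G j k := rfl
  have hGj0 : ∀ j k, j ∉ Jf → G j k = 0 := by
    intro j k hj
    have hz : θv j ∘ₗ lRes ρ p x = 0 := by
      by_contra h
      exact hj ((hθ4 x).2.mem_toFinset.mpr h)
    have h0 : θv j (lRes ρ p x (σ k P)) = 0 := LinearMap.congr_fun hz (σ k P)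
    simp only [hG, h0, map_zero, ZeroMemClass.coe_zero]
  have hGk0 : ∀ j k, k ∉ Kf → G j k = 0 := by
    intro j k hk
    have hz : lRes ρ p x ∘ₗ σ k = 0 := by
      by_contra h
      exact hk ((hσ4 x).1.mem_toFinset.mpr h)
    have h0 : lRes ρ p x (σ k P) = 0 := LinearMap.congr_fun hz P
    simp only [hG, h0, map_zero, ZeroMemClass.coe_zero]
  have step2 : ∀ j, φ ((θv j (lRes ρ p x (θ j P)) : B)) = ∑ k ∈ Kf, G j k := by
    intro j
    set ξ : ↥(rFix ρ p) := θ j P with hξ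
    set Kd : Finset K := (hσ3 ξ).1.toFinset with hKd
    have hGd0 : ∀ k ∉ Kd, G j k = 0 := by
      intro k hk
      have h0 : σv k ξ = 0 := by
        by_contra h
        exact hk ((hσ3 ξ).1.mem_toFinset.mpr h)
      rw [← hmain j k, ← hξ, h0]
      simp only [map_zero, ZeroMemClass.coe_zero]
    have hss : (Function.support fun k => ((σ k (σv k ξ) : M))) ⊆ ↑Kd := by
      intro k hk
      simp only [Function.mem_support] at hk
      refine Finset.mem_coe.mpr ((hσ3 ξ).1.mem_toFinset.mpr ?_)
      intro h0
      apply hk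
      rw [h0, map_zero, ZeroMemClass.coe_zero]
    have hsum : ξ = ∑ k ∈ Kd, σ k (σv k ξ) := by
      apply Subtype.ext
      rw [Submodule.coe_sum, ← finsum_eq_finset_sum_of_support_subset _ hss]
      exact ((hσ3 ξ).2).symm
    have hcalc : φ ((θv j (lRes ρ p x ξ) : B)) = ∑ k ∈ Kd, G j k := by
      conv_lhs => rw [hsum]
      rw [map_sum, map_sum, Submodule.coe_sum, map_sum]
      exact Finset.sum_congr rfl fun k _ => hmain j k
    rw [hcalc]
    rw [Finset.sum_subset (Finset.subset_union_left : Kd ⊆ Kd ∪ Kf)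
      (fun k _ hk => hGd0 k hk)]
    exact (Finset.sum_subset (Finset.subset_union_right : Kf ⊆ Kd ∪ Kf)
      (fun k _ hk => hGk0 j k hk)).symm
  have step3 : ∀ k, ∑ j ∈ Jf, G j k = φ ((σv k (lRes ρ p x (σ k P)) : B)) := by
    intro k
    set η : ↥(rFix ρ p) := lRes ρ p x (σ k P) with hη
    have hsupp : ∀ j, j ∉ Jf → θv j η = 0 := by
      intro j hj
      have hz : θv j ∘ₗ lRes ρ p x = 0 := by
        by_contra h
        exact hj ((hθ4 x).2.mem_toFinset.mpr h)
      exact LinearMap.congr_fun hz (σ k P)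
    have hsum : (∑ j ∈ Jf, θ j (θv j η)) = η := by
      apply Subtype.ext
      rw [Submodule.coe_sum]
      have hss : (Function.support fun j => ((θ j (θv j η) : M))) ⊆ ↑Jf := by
        intro j hj
        simp only [Function.mem_support] at hj
        by_contra hjf
        apply hj
        rw [hsupp j hjf, map_zero, ZeroMemClass.coe_zero]
      rw [← finsum_eq_finset_sum_of_support_subset _ hss]
      exact (hθ3 η).2
    calc ∑ j ∈ Jf, G j k
        = φ ((σv k (∑ j ∈ Jf, θ j (θv j η)) : B)) := by
          rw [map_sum, Submodule.coe_sum, map_sum]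
      _ = φ ((σv k η : B)) := by rw [hsum]
  have hLss : (Function.support fun j => φ ((θv j (lRes ρ p x (θ j P)) : B))) ⊆ ↑Jf := by
    intro j hj
    simp only [Function.mem_support] at hj
    have hz : θv j ∘ₗ lRes ρ p x ≠ 0 := by
      intro h0
      apply hj
      rw [show θv j (lRes ρ p x (θ j P)) = 0 from LinearMap.congr_fun h0 (θ j P)]
      simp only [ZeroMemClass.coe_zero, map_zero]
    exact Finset.mem_coe.mpr ((hθ4 x).2.mem_toFinset.mpr hz)
  have hLHS : ∑ᶠ j, φ ((θv j (lRes ρ p x (θ j P)) : B)) = ∑ j ∈ Jf, ∑ k ∈ Kf, G j k := by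
    rw [finsum_eq_finset_sum_of_support_subset _ hLss]
    exact Finset.sum_congr rfl fun j _ => step2 j
  have hRss : (Function.support fun k => φ ((σv k (lRes ρ p x (σ k P)) : B))) ⊆ ↑Kf := by
    intro k hk
    simp only [Function.mem_support] at hk
    have hz : lRes ρ p x ∘ₗ σ k ≠ 0 := by
      intro h0
      apply hk
      rw [show lRes ρ p x (σ k P) = 0 from LinearMap.congr_fun h0 P]
      simp only [map_zero, ZeroMemClass.coe_zero]
    exact Finset.mem_coe.mpr ((hσ4 x).1.mem_toFinset.mpr hz)
  have hRHS : ∑ᶠ k, φ ((σv k (lRes ρ p x (σ k P)) : B))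
      = ∑ k ∈ Kf, φ ((σv k (lRes ρ p x (σ k P)) : B)) :=
    finsum_eq_finset_sum_of_support_subset _ hRss
  rw [hLHS, Finset.sum_comm, hRHS]
  exact Finset.sum_congr rfl fun k _ => step3 k

end Helpers

/-- Let `M` be an `A`-`B` bimodule with a left coordinate system, `B` unital
finite-dimensional, and `p ∈ B` a generating idempotent.  Then (1) the `A`-`pBp` bimodule
`Mp` has a left coordinate system, and (2) for every symmetric linear functional `φ` on `B`,
every left coordinate system of `Mp`, and every `x ∈ A`, the pseudotrace of `x` computed from
`φ|_{pBp}` and `Mp` equals the pseudotrace computed from `φ` and `M`. -/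
theorem stmt_14 {A B M : Type*} [NonUnitalRing A] [Module ℂ A] [SMulCommClass ℂ A A]
    [IsScalarTower ℂ A A] [Ring B] [Algebra ℂ B] [FiniteDimensional ℂ B]
    [AddCommGroup M] [Module ℂ M]
    (ρ : BimoduleStr A B M) {I : Type v}
    (α : I → (B →ₗ[ℂ] M)) (αv : I → (M →ₗ[ℂ] B)) (hα : IsLeftCoordSys ρ α αv)
    (p : B) (hp : IsGenIdem B p) (hpp : p ∈ subCorner B p p) :
    (∃ (J : Type v) (θ : J → (↥(subCorner B p p) →ₗ[ℂ] ↥(rFix ρ p)))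
        (θv : J → (↥(rFix ρ p) →ₗ[ℂ] ↥(subCorner B p p))),
      IsLeftCoordSysCorner ρ p θ θv) ∧
    (∀ φ : B →ₗ[ℂ] ℂ, IsSLF B φ →
      ∀ {J : Type w} (θ : J → (↥(subCorner B p p) →ₗ[ℂ] ↥(rFix ρ p)))
        (θv : J → (↥(rFix ρ p) →ₗ[ℂ] ↥(subCorner B p p))),
        IsLeftCoordSysCorner ρ p θ θv → ∀ x : A,
        {j | φ ((θv j (lRes ρ p x (θ j ⟨p, hpp⟩)) : B)) ≠ 0}.Finite ∧
        {i | φ (αv i (ρ.l x (α i 1))) ≠ 0}.Finite ∧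
        ∑ᶠ j, φ ((θv j (lRes ρ p x (θ j ⟨p, hpp⟩)) : B))
          = ∑ᶠ i, φ (αv i (ρ.l x (α i 1)))) := by
    classical
  obtain ⟨hα1, hα2, hα3, hα4⟩ := hα
  have hpq : p * p = p := hp.1
  obtain ⟨m, u, v, hu, hv, huv⟩ := exists_uv p hp
  have hmem1 : ∀ (k : I × Fin m) (b : ↥(subCorner B p p)),
      α k.1 (u k.2 * (b : B)) ∈ rFix ρ p := by
    intro k b
    show ρ.r p (α k.1 (u k.2 * (b : B))) = α k.1 (u k.2 * (b : B))
    rw [← hα1 k.1 (u k.2 * (b : B)) p, mul_assoc, corner_pr hpq b.2]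
  have hmem2 : ∀ (k : I × Fin m) (ξ : ↥(rFix ρ p)),
      v k.2 * αv k.1 ((ξ : M)) ∈ subCorner B p p := by
    intro k ξ
    have hξ2 : ρ.r p ((ξ : M)) = (ξ : M) := ξ.2
    have hwp : αv k.1 ((ξ : M)) * p = αv k.1 ((ξ : M)) := by
      rw [← hα2 k.1 ((ξ : M)) p, hξ2]
    show p * (v k.2 * αv k.1 ((ξ : M))) * p = v k.2 * αv k.1 ((ξ : M))
    rw [show p * (v k.2 * αv k.1 ((ξ : M))) * p
        = (p * v k.2) * (αv k.1 ((ξ : M)) * p) by noncomm_ring, hv k.2, hwp]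
  set θ' : (I × Fin m) → (↥(subCorner B p p) →ₗ[ℂ] ↥(rFix ρ p)) := fun k =>
    LinearMap.codRestrict (rFix ρ p)
      ((α k.1) ∘ₗ (LinearMap.mulLeft ℂ (u k.2)) ∘ₗ (subCorner B p p).subtype)
      (fun b => hmem1 k b) with hθ'def
  set θv' : (I × Fin m) → (↥(rFix ρ p) →ₗ[ℂ] ↥(subCorner B p p)) := fun k =>
    LinearMap.codRestrict (subCorner B p p)
      ((LinearMap.mulLeft ℂ (v k.2)) ∘ₗ (αv k.1) ∘ₗ (rFix ρ p).subtype)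
      (fun ξ => hmem2 k ξ) with hθv'def
  have hco1 : ∀ (k : I × Fin m) (b : ↥(subCorner B p p)),
      ((θ' k b : M)) = α k.1 (u k.2 * (b : B)) := fun k b => rfl
  have hco2 : ∀ (k : I × Fin m) (ξ : ↥(rFix ρ p)),
      ((θv' k ξ : B)) = v k.2 * αv k.1 ((ξ : M)) := fun k ξ => rfl
  have hcs : IsLeftCoordSysCorner ρ p θ' θv' := by
    refine ⟨?_, ?_, ?_, ?_⟩
    · intro k b c hb hc hbc
      rw [hco1, hco1, ← hα1 k.1 (u k.2 * b) c, mul_assoc]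
    · intro k ξ hξ c hc hrc
      rw [hco2, hco2, hα2 k.1 ξ c]
      exact (mul_assoc _ _ _).symm
    · intro ξ
      constructor
      · refine Set.Finite.subset
          (Set.Finite.prod (hα3 ((ξ : M))).1 (Set.finite_univ (α := Fin m))) ?_
        intro k hk
        simp only [Set.mem_setOf_eq] at hk
        refine Set.mem_prod.mpr ⟨?_, trivial⟩
        intro h0
        apply hk
        apply Subtype.ext
        rw [hco2, h0, mul_zero, ZeroMemClass.coe_zero]
      · have hss : (Function.support fun k : I × Fin m => ((θ' k (θv' k ξ) : M)))
            ⊆ ↑(((hα3 ((ξ : M))).1.toFinset) ×ˢ (Finset.univ : Finset (Fin m))) := by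
          intro k hk
          simp only [Function.mem_support] at hk
          simp only [Finset.coe_product, Set.mem_prod, Finset.mem_coe, Finset.mem_univ,
            and_true, Set.Finite.mem_toFinset]
          intro h0
          apply hk
          rw [hco1, hco2, h0, mul_zero, mul_zero, map_zero]
        rw [finsum_eq_finset_sum_of_support_subset _ hss, Finset.sum_product]
        have hinner : ∀ i ∈ (hα3 ((ξ : M))).1.toFinset,
            ∑ s : Fin m, ((θ' (i, s) (θv' (i, s) ξ) : M)) = α i (αv i ((ξ : M))) := by
          intro i _
          have hterm : ∀ s : Fin m, ((θ' (i, s) (θv' (i, s) ξ) : M))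
              = α i ((u s * v s) * αv i ((ξ : M))) := by
            intro s
            rw [hco1, hco2]
            congr 1
            noncomm_ring
          rw [Finset.sum_congr rfl fun s _ => hterm s, ← map_sum, ← Finset.sum_mul, huv,
            one_mul]
        rw [Finset.sum_congr rfl hinner]
        have hss2 : (Function.support fun i => α i (αv i ((ξ : M))))
            ⊆ ↑((hα3 ((ξ : M))).1.toFinset) := by
          intro i hi
          simp only [Function.mem_support] at hi
          simp only [Finset.mem_coe, Set.Finite.mem_toFinset]
          intro h0
          apply hi
          rw [h0, map_zero]
        rw [← finsum_eq_finset_sum_of_support_subset _ hss2]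
        exact (hα3 ((ξ : M))).2
    · intro y
      constructor
      · refine Set.Finite.subset
          (Set.Finite.prod (hα4 y).1 (Set.finite_univ (α := Fin m))) ?_
        intro k hk
        simp only [Set.mem_setOf_eq] at hk
        refine Set.mem_prod.mpr ⟨?_, trivial⟩
        intro h0
        apply hk
        apply LinearMap.ext
        intro b
        apply Subtype.ext
        show ρ.l y ((θ' k b : M)) = _
        rw [hco1]
        exact LinearMap.congr_fun h0 (u k.2 * (b : B))
      · refine Set.Finite.subset
          (Set.Finite.prod (hα4 y).2 (Set.finite_univ (α := Fin m))) ?_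
        intro k hk
        simp only [Set.mem_setOf_eq] at hk
        refine Set.mem_prod.mpr ⟨?_, trivial⟩
        intro h0
        apply hk
        apply LinearMap.ext
        intro ξ
        apply Subtype.ext
        show ((θv' k (lRes ρ p y ξ) : B)) = _
        rw [hco2, lRes_coe,
          show αv k.1 (ρ.l y ((ξ : M))) = 0 from LinearMap.congr_fun h0 ((ξ : M)),
          mul_zero]
        simp
  refine ⟨⟨I × Fin m, θ', θv', hcs⟩, ?_⟩
  intro φ hφ J' θ θv hθcs x
  refine ⟨?_, ?_, ?_⟩
  · refine Set.Finite.subset (hθcs.2.2.2 x).2 ?_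
    intro j hj
    simp only [Set.mem_setOf_eq] at hj ⊢
    intro h0
    apply hj
    rw [show θv j (lRes ρ p x (θ j ⟨p, hpp⟩)) = 0 from LinearMap.congr_fun h0 _]
    simp only [ZeroMemClass.coe_zero, map_zero]
  · refine Set.Finite.subset (hα4 x).2 ?_
    intro i hi
    simp only [Set.mem_setOf_eq] at hi ⊢
    intro h0
    apply hi
    rw [show αv i (ρ.l x (α i 1)) = 0 from LinearMap.congr_fun h0 _]
    exact map_zero φ
  · rw [trace_indep ρ hpq hpp θ θv hθcs θ' θv' hcs φ hφ x]
    have hw0 : ∀ i : I, αv i ∘ₗ ρ.l x = 0 → αv i (ρ.l x (α i 1)) = 0 := fun i h =>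
      LinearMap.congr_fun h (α i 1)
    have hterm : ∀ k : I × Fin m,
        φ ((θv' k (lRes ρ p x (θ' k ⟨p, hpp⟩)) : B))
          = φ (αv k.1 (ρ.l x (α k.1 1)) * (u k.2 * v k.2)) := by
      intro k
      have h1 : ((θ' k ⟨p, hpp⟩ : M)) = ρ.r (u k.2) (α k.1 1) := by
        rw [hco1]
        have h2 := hα1 k.1 1 (u k.2)
        rw [one_mul] at h2
        show α k.1 (u k.2 * p) = _
        rw [hu k.2, h2]
      have h3 : ((θv' k (lRes ρ p x (θ' k ⟨p, hpp⟩)) : B))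
          = v k.2 * (αv k.1 (ρ.l x (α k.1 1)) * u k.2) := by
        rw [hco2, lRes_coe, h1, lr_apply, hα2 k.1 _ (u k.2)]
      rw [h3, hφ (v k.2) (αv k.1 (ρ.l x (α k.1 1)) * u k.2)]
      congr 1
      noncomm_ring
    have hss : (Function.support fun k : I × Fin m =>
        φ ((θv' k (lRes ρ p x (θ' k ⟨p, hpp⟩)) : B)))
        ⊆ ↑(((hα4 x).2.toFinset) ×ˢ (Finset.univ : Finset (Fin m))) := by
      intro k hk
      simp only [Function.mem_support] at hk
      simp only [Finset.coe_product, Set.mem_prod, Finset.mem_coe, Finset.mem_univ,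
        and_true, Set.Finite.mem_toFinset]
      intro h0
      apply hk
      rw [hterm k, hw0 k.1 h0, zero_mul, map_zero]
    have hss2 : (Function.support fun i => φ (αv i (ρ.l x (α i 1))))
        ⊆ ↑((hα4 x).2.toFinset) := by
      intro i hi
      simp only [Function.mem_support] at hi
      simp only [Finset.mem_coe, Set.Finite.mem_toFinset]
      intro h0
      apply hi
      rw [hw0 i h0, map_zero]
    rw [finsum_eq_finset_sum_of_support_subset _ hss]
    calc ∑ k ∈ ((hα4 x).2.toFinset) ×ˢ (Finset.univ : Finset (Fin m)),
          φ ((θv' k (lRes ρ p x (θ' k ⟨p, hpp⟩)) : B))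
        = ∑ k ∈ ((hα4 x).2.toFinset) ×ˢ (Finset.univ : Finset (Fin m)),
            φ (αv k.1 (ρ.l x (α k.1 1)) * (u k.2 * v k.2)) :=
          Finset.sum_congr rfl fun k _ => hterm k
      _ = ∑ i ∈ (hα4 x).2.toFinset, ∑ s : Fin m,
            φ (αv i (ρ.l x (α i 1)) * (u s * v s)) := by rw [Finset.sum_product]
      _ = ∑ i ∈ (hα4 x).2.toFinset, φ (αv i (ρ.l x (α i 1))) := by
          refine Finset.sum_congr rfl fun i _ => ?_
          rw [← map_sum, ← Finset.mul_sum, huv, mul_one]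
      _ = ∑ᶠ i, φ (αv i (ρ.l x (α i 1))) :=
          (finsum_eq_finset_sum_of_support_subset _ hss2).symm
end

section
/- Let A be an AUF algebra and e ∈ A a generating idempotent, so that eAe = {x ∈ A : exe = x} is a unital finite-dimensional ℂ-algebra with unit e. Let n ≥ 1, let M_n(eAe) be the algebra of n×n matrices over eAe, let p ∈ M_n(eAe) be a generating idempotent of the unital finite-dimensional algebra M_n(eAe), and set B = p M_n(eAe) p = {b ∈ M_n(eAe) : pbp = b}. Then the map Θ : SLF(A) → SLF(B) defined by Θ(ψ)(b) = Σ_{k=1}^n ψ(b_{kk}) (where b_{kk} ∈ eAe ⊆ A are the diagonal entries of b) is well defined (Θ(ψ) is indeed a symmetric linear functional on B) and is a ℂ-linear bijection from SLF(A) onto SLF(B). -/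
open scoped BigOperators

universe u v

section Stmt15

variable {A : Type u} [NonUnitalRing A] [Module ℂ A] [SMulCommClass ℂ A A] [IsScalarTower ℂ A A]

/-- The map `Θ(ψ)(b) = Σ_k ψ(b_{kk})` on the corner `B = p M_n(eAe) p`. -/
noncomputable def Theta {n : ℕ} (p : Matrix (Fin n) (Fin n) A) (ψ : A →ₗ[ℂ] ℂ) :
    ↥(subCorner (Matrix (Fin n) (Fin n) A) p p) →ₗ[ℂ] ℂ where
  toFun b := ∑ k, ψ (b.1 k k)
  map_add' x y := by
    simp only [Submodule.coe_add, Matrix.add_apply, map_add, Finset.sum_add_distrib]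
  map_smul' c x := by
    simp only [SetLike.val_smul, Matrix.smul_apply, map_smul, RingHom.id_apply,
      smul_eq_mul, Finset.mul_sum]

end Stmt15

section Aux
variable {R : Type u} [NonUnitalRing R] [Module ℂ R] [SMulCommClass ℂ R R] [IsScalarTower ℂ R R]

lemma mem_subCorner {e f x : R} : x ∈ subCorner R e f ↔ e * x * f = x := Iff.rfl

lemma subIdem_trans {a b c : R} (hab : SubIdem R a b) (hbc : SubIdem R b c) :
    SubIdem R a c := by
  constructor
  · calc a * c = a * b * c := by rw [hab.1]
    _ = a * (b * c) := mul_assoc _ _ _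
    _ = a * b := by rw [hbc.1]
    _ = a := hab.1
  · calc c * a = c * (b * a) := by rw [hab.2]
    _ = c * b * a := (mul_assoc _ _ _).symm
    _ = b * a := by rw [hbc.2]
    _ = a := hab.2

lemma primDecomp : ∀ (N : ℕ) (f : R), IsIdem R f → FiniteDimensional ℂ (subCorner R f f) →
    Module.finrank ℂ (subCorner R f f) ≤ N →
    ∃ (m : ℕ) (q : Fin m → R), (∀ s, IsPrimIdem R (q s)) ∧
      (∀ s t, s ≠ t → OrthIdem R (q s) (q t)) ∧ (∀ s, SubIdem R (q s) f) ∧ (∑ s, q s) = f := by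
  intro N
  induction N using Nat.strong_induction_on with
  | _ N ih =>
    intro f hf hfd hrk
    by_cases hf0 : f = 0
    · exact ⟨0, ![], by simp, by simp, by simp, by simp [hf0]⟩
    by_cases hfp : IsPrimIdem R f
    · exact ⟨1, fun _ => f, fun _ => hfp, fun s t hst => absurd (Subsingleton.elim s t) hst,
        fun _ => ⟨hf, hf⟩, by simp⟩
    · -- get a proper nonzero subidempotent g
      have hex : ∃ g : R, IsIdem R g ∧ SubIdem R g f ∧ g ≠ 0 ∧ g ≠ f := by
        by_contra hc
        push_neg at hc
        refine hfp ⟨hf, hf0, fun g hg hgf => ?_⟩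
        by_cases h0 : g = 0
        · exact Or.inl h0
        · exact Or.inr (by
            by_contra hne
            exact hne (hc g hg hgf h0))
      obtain ⟨g, hg, hgf, hg0, hgne⟩ := hex
      have hff : f * f = f := hf
      have hgg : g * g = g := hg
      set h := f - g with hh
      have hfg : f * g = g := hgf.2
      have hgf' : g * f = g := hgf.1
      have hhidem : IsIdem R h := by
        show _ = _
        simp only [hh, sub_mul, mul_sub, hff, hfg, hgf', hgg]
        abel
      have hgh : g * h = 0 := by simp [hh, mul_sub, hgf', hgg]
      have hhg : h * g = 0 := by simp [hh, sub_mul, hfg, hgg]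
      have hhf : SubIdem R h f := by
        constructor
        · simp [hh, sub_mul, hff, hgf']
        · simp [hh, mul_sub, hff, hfg]
      have hh0 : h ≠ 0 := by
        intro hc
        have : f = g := by rwa [sub_eq_zero] at hc
        exact hgne this.symm
      have cle : ∀ k : R, SubIdem R k f → subCorner R k k ≤ subCorner R f f := by
        intro k hk x hx
        rw [mem_subCorner] at hx ⊢
        rw [← hx]
        calc f * (k * x * k) * f = (f * k) * x * (k * f) := by noncomm_ring
        _ = k * x * k := by rw [hk.2, hk.1]
      have hmemf : ∀ k : R, SubIdem R k f → IsIdem R k → k ∈ subCorner R f f := by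
        intro k hk hki
        rw [mem_subCorner]
        rw [hk.2, hk.1]
      have hstrict : ∀ k k' : R, SubIdem R k f → SubIdem R k' f → IsIdem R k' → k' ≠ 0 →
          k * k' = 0 → subCorner R k k < subCorner R f f := by
        intro k k' hk hk' hk'i hk'0 hkk'
        refine lt_of_le_of_ne (cle k hk) ?_
        intro hceq
        have : k' ∈ subCorner R k k := by rw [hceq]; exact hmemf k' hk' hk'i
        rw [mem_subCorner] at this
        rw [← this] at hk'0
        exact hk'0 (by rw [hkk']; simp)
      have hglt := hstrict g h hgf hhf hhidem hh0 hgh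
      have hhlt := hstrict h g hhf hgf hg hg0 hhg
      have hgd : FiniteDimensional ℂ (subCorner R g g) :=
        Submodule.finiteDimensional_of_le (cle g hgf)
      have hhd : FiniteDimensional ℂ (subCorner R h h) :=
        Submodule.finiteDimensional_of_le (cle h hhf)
      have hgrk := Submodule.finrank_lt_finrank_of_lt hglt
      have hhrk := Submodule.finrank_lt_finrank_of_lt hhlt
      obtain ⟨m₁, q₁, hq₁p, hq₁o, hq₁s, hq₁sum⟩ :=
        ih (Module.finrank ℂ (subCorner R g g)) (lt_of_lt_of_le hgrk hrk) g hg hgd le_rfl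
      obtain ⟨m₂, q₂, hq₂p, hq₂o, hq₂s, hq₂sum⟩ :=
        ih (Module.finrank ℂ (subCorner R h h)) (lt_of_lt_of_le hhrk hrk) h hhidem hhd le_rfl
      have cross : ∀ (a b : R), SubIdem R a g → SubIdem R b h → a * b = 0 ∧ b * a = 0 := by
        intro a b ha hb
        constructor
        · calc a * b = (a * g) * (h * b) := by rw [ha.1, hb.2]
          _ = a * (g * h) * b := by noncomm_ring
          _ = 0 := by rw [hgh]; simp
        · calc b * a = (b * h) * (g * a) := by rw [hb.1, ha.2]
          _ = b * (h * g) * a := by noncomm_ring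
          _ = 0 := by rw [hhg]; simp
      refine ⟨m₁ + m₂, Fin.addCases q₁ q₂, ?_, ?_, ?_, ?_⟩
      · intro s
        induction s using Fin.addCases with
        | left i => simpa using hq₁p i
        | right i => simpa using hq₂p i
      · intro s t hst
        induction s using Fin.addCases with
        | left i =>
          induction t using Fin.addCases with
          | left j =>
            simp only [Fin.addCases_left]
            exact hq₁o i j (fun hc => hst (by rw [hc]))
          | right j =>
            simp only [Fin.addCases_left, Fin.addCases_right]
            exact ⟨(cross _ _ (hq₁s i) (hq₂s j)).1, (cross _ _ (hq₁s i) (hq₂s j)).2⟩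
        | right i =>
          induction t using Fin.addCases with
          | left j =>
            simp only [Fin.addCases_left, Fin.addCases_right]
            exact ⟨(cross _ _ (hq₁s j) (hq₂s i)).2, (cross _ _ (hq₁s j) (hq₂s i)).1⟩
          | right j =>
            simp only [Fin.addCases_right]
            exact hq₂o i j (fun hc => hst (by rw [hc]))
      · intro s
        induction s using Fin.addCases with
        | left i =>
          simp only [Fin.addCases_left]
          exact subIdem_trans (hq₁s i) hgf
        | right i =>
          simp only [Fin.addCases_right]
          exact subIdem_trans (hq₂s i) hhf
      · rw [Fin.sum_univ_add]
        simp only [Fin.addCases_left, Fin.addCases_right, hq₁sum, hq₂sum, hh]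
        abel

end Aux

section Aux2
variable {R : Type u} [NonUnitalRing R] [Module ℂ R] [SMulCommClass ℂ R R] [IsScalarTower ℂ R R]

lemma mul_sum_orth {n : ℕ} {ε : Fin n → R} (hidem : ∀ k, IsIdem R (ε k))
    (horth : ∀ k l, k ≠ l → OrthIdem R (ε k) (ε l)) (k : Fin n) :
    ε k * (∑ l, ε l) = ε k ∧ (∑ l, ε l) * ε k = ε k := by
  constructor
  · rw [Finset.mul_sum]
    rw [Finset.sum_eq_single k]
    · exact hidem k
    · intro l _ hl
      exact (horth k l (fun hc => hl (by rw [hc]))).1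
    · intro hk; exact absurd (Finset.mem_univ k) hk
  · rw [Finset.sum_mul]
    rw [Finset.sum_eq_single k]
    · exact hidem k
    · intro l _ hl
      exact (horth l k hl).1
    · intro hk; exact absurd (Finset.mem_univ k) hk

lemma fullness {e : R} (hgen : IsGenIdem R e) (f : R) (hf : IsIdem R f)
    (hfd : FiniteDimensional ℂ (subCorner R f f)) :
    ∃ (m : ℕ) (a b : Fin m → R), (∀ s, a s * e = a s) ∧ (∀ s, e * b s = b s) ∧
      (∑ s, a s * b s) = f := by
  obtain ⟨m, q, hqp, hqo, hqs, hqsum⟩ :=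
    primDecomp (Module.finrank ℂ (subCorner R f f)) f hf hfd le_rfl
  obtain ⟨he, n', ε, hεp, hεo, hesum, hεgen⟩ := hgen
  have hεe : ∀ k, ε k * e = ε k ∧ e * ε k = ε k := by
    intro k
    rw [hesum]
    exact ⟨(mul_sum_orth (fun k => (hεp k).1) hεo k).1, (mul_sum_orth (fun k => (hεp k).1) hεo k).2⟩
  have H : ∀ s, ∃ a b : R, a * e = a ∧ e * b = b ∧ a * b = q s := by
    intro s
    obtain ⟨k, u, v, hu, hv, huv, hvu⟩ := hεgen (q s) (hqp s)
    refine ⟨u * ε k, ε k * v, ?_, ?_, ?_⟩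
    · rw [mul_assoc, (hεe k).1]
    · rw [← mul_assoc, (hεe k).2]
    · have hqq : q s * q s = q s := (hqp s).1
      calc u * ε k * (ε k * v) = u * (ε k * ε k) * v := by noncomm_ring
      _ = u * ε k * v := by rw [(hεp k).1]
      _ = u * (v * u) * v := by rw [hvu]
      _ = (u * v) * (u * v) := by noncomm_ring
      _ = q s := by rw [huv, hqq]
  choose a b ha hb hab using H
  exact ⟨m, a, b, ha, hb, by rw [← hqsum]; exact Finset.sum_congr rfl (fun s _ => hab s)⟩

lemma primIdem_to_In {E q : R} (hq : IsPrimIdem R q) (hqE : SubIdem R q E) :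
    IsPrimIdemIn R E q :=
  ⟨⟨hq.1, by rw [hqE.2, hqE.1]⟩, hq.2.1, fun g hg hgq => hq.2.2 g hg.1 hgq⟩

lemma fullnessIn {E p : R} (hE : IsIdem R E) (hp : IsGenIdemIn R E p)
    (hfd : FiniteDimensional ℂ (subCorner R E E)) :
    ∃ (m : ℕ) (a b : Fin m → R), (∀ s, E * a s * E = a s) ∧ (∀ s, E * b s * E = b s) ∧
      (∑ s, a s * p * b s) = E := by
  obtain ⟨m, q, hqp, hqo, hqs, hqsum⟩ :=
    primDecomp (Module.finrank ℂ (subCorner R E E)) E hE hfd le_rfl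
  obtain ⟨hpIn, n', π, hπp, hπo, hpsum, hπgen⟩ := hp
  have hππ : ∀ k, π k * p = π k ∧ p * π k = π k := by
    intro k
    rw [hpsum]
    exact ⟨(mul_sum_orth (fun k => (hπp k).1.1) hπo k).1,
      (mul_sum_orth (fun k => (hπp k).1.1) hπo k).2⟩
  have H : ∀ s, ∃ a b : R, E * a * E = a ∧ E * b * E = b ∧ a * p * b = q s := by
    intro s
    obtain ⟨k, u, v, huE, hvE, hu, hv, huv, hvu⟩ := hπgen (q s) (primIdem_to_In (hqp s) (hqs s))
    have hEu : E * u = u := by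
      conv_lhs => rw [← huE]
      calc E * (E * u * E) = (E * E) * u * E := by noncomm_ring
      _ = E * u * E := by rw [hE]
      _ = u := huE
    have hπE : π k * E = π k := by
      have h2 : E * π k * E = π k := (hπp k).1.2
      conv_lhs => rw [← h2]
      calc E * π k * E * E = E * π k * (E * E) := by noncomm_ring
      _ = E * π k * E := by rw [hE]
      _ = π k := h2
    have hvE' : v * E = v := by
      conv_lhs => rw [← hvE]
      calc E * v * E * E = E * v * (E * E) := by noncomm_ring
      _ = E * v * E := by rw [hE]
      _ = v := hvE
    refine ⟨u * π k, π k * v, ?_, ?_, ?_⟩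
    · calc E * (u * π k) * E = (E * u) * (π k * E) := by noncomm_ring
      _ = u * π k := by rw [hEu, hπE]
    · have hEπ : E * π k = π k := by
        have h2 : E * π k * E = π k := (hπp k).1.2
        conv_lhs => rw [← h2]
        calc E * (E * π k * E) = (E * E) * π k * E := by noncomm_ring
        _ = E * π k * E := by rw [hE]
        _ = π k := h2
      calc E * (π k * v) * E = (E * π k) * (v * E) := by noncomm_ring
      _ = π k * v := by rw [hEπ, hvE']
    · have hqq : q s * q s = q s := (hqp s).1
      have hππ' : π k * π k = π k := (hπp k).1.1
      calc u * π k * p * (π k * v) = (u * (π k * p)) * (π k * v) := by noncomm_ring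
      _ = (u * π k) * (π k * v) := by rw [(hππ k).1]
      _ = u * (π k * π k) * v := by noncomm_ring
      _ = u * π k * v := by rw [hππ']
      _ = u * (v * u) * v := by rw [hvu]
      _ = (u * v) * (u * v) := by noncomm_ring
      _ = q s := by rw [huv, hqq]
  choose a b ha hb hab using H
  exact ⟨m, a, b, ha, hb, by rw [← hqsum]; exact Finset.sum_congr rfl (fun s _ => hab s)⟩

end Aux2

section Aux3
variable {R : Type u} [NonUnitalRing R] [Module ℂ R] [SMulCommClass ℂ R R] [IsScalarTower ℂ R R]
variable {I : Type v} {E : I → R}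

lemma corner_top (hW : IsAUFWitness R E) :
    (⨆ μ : I × I, subCorner R (E μ.1) (E μ.2)) = ⊤ := by
  rw [iSup_prod]
  exact hW.2.2.2

lemma corner_indep (hW : IsAUFWitness R E) :
    iSupIndep (fun μ : I × I => subCorner R (E μ.1) (E μ.2)) := by
  intro μ
  rw [Submodule.disjoint_def]
  intro x hx1 hx2
  set P : R →ₗ[ℂ] R := (LinearMap.mulRight ℂ (E μ.2)).comp (LinearMap.mulLeft ℂ (E μ.1)) with hP
  have hPapp : ∀ z : R, P z = E μ.1 * z * E μ.2 := by
    intro z; simp [hP]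
  have hPx : P x = x := by rw [hPapp]; exact hx1
  have hker : (⨆ ν, ⨆ (_ : ν ≠ μ), subCorner R (E ν.1) (E ν.2)) ≤ LinearMap.ker P := by
    refine iSup_le fun ν => iSup_le fun hν => ?_
    intro y hy
    rw [mem_subCorner] at hy
    rw [LinearMap.mem_ker, hPapp, ← hy]
    by_cases h1 : ν.1 = μ.1
    · have h2 : ν.2 ≠ μ.2 := fun hc => hν (Prod.ext h1 hc)
      calc E μ.1 * (E ν.1 * y * E ν.2) * E μ.2
          = (E μ.1 * E ν.1) * y * (E ν.2 * E μ.2) := by noncomm_ring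
      _ = 0 := by rw [(hW.2.1 ν.2 μ.2 h2).1]; simp
    · calc E μ.1 * (E ν.1 * y * E ν.2) * E μ.2
          = (E μ.1 * E ν.1) * y * (E ν.2 * E μ.2) := by noncomm_ring
      _ = 0 := by rw [(hW.2.1 μ.1 ν.1 (fun hc => h1 hc.symm)).1]; simp
  have h0 : P x = 0 := hker hx2
  rw [hPx] at h0; exact h0

lemma exists_psi (hW : IsAUFWitness R E) (F : I × I → (R →ₗ[ℂ] ℂ)) :
    ∃ ψ : R →ₗ[ℂ] ℂ, ∀ (μ : I × I) (x : R), x ∈ subCorner R (E μ.1) (E μ.2) → ψ x = F μ x := by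
  classical
  have hint : DirectSum.IsInternal (fun μ : I × I => subCorner R (E μ.1) (E μ.2)) :=
    DirectSum.isInternal_submodule_of_iSupIndep_of_iSup_eq_top (corner_indep hW) (corner_top hW)
  set eqv := LinearEquiv.ofBijective
    (DirectSum.coeLinearMap (fun μ : I × I => subCorner R (E μ.1) (E μ.2))) hint with heqv
  refine ⟨(DirectSum.toModule ℂ (I × I) ℂ
      (fun μ => (F μ).comp (subCorner R (E μ.1) (E μ.2)).subtype)).comp
      (eqv.symm : R →ₗ[ℂ] _), ?_⟩
  intro μ x hx
  have h1 : eqv.symm x = DirectSum.lof ℂ (I × I)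
      (fun μ : I × I => subCorner R (E μ.1) (E μ.2)) μ ⟨x, hx⟩ := by
    apply eqv.injective
    rw [LinearEquiv.apply_symm_apply]
    show x = eqv _
    rw [heqv]
    exact (DirectSum.coeLinearMap_of (R := ℂ) (fun μ : I × I => subCorner R (E μ.1) (E μ.2)) μ ⟨x, hx⟩).symm
  rw [LinearMap.comp_apply]
  show (DirectSum.toModule ℂ (I × I) ℂ _) (eqv.symm x) = _
  rw [h1, DirectSum.toModule_lof]
  rfl

lemma linmap_eq_zero (hW : IsAUFWitness R E) (ψ : R →ₗ[ℂ] ℂ)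
    (h : ∀ (i j : I) (x : R), E i * x * E j = x → ψ x = 0) : ψ = 0 := by
  ext x
  have hx : x ∈ (⊤ : Submodule ℂ R) := trivial
  rw [← hW.2.2.2] at hx
  have hle : (⨆ i, ⨆ j, subCorner R (E i) (E j)) ≤ LinearMap.ker ψ :=
    iSup_le fun i => iSup_le fun j => fun y hy => LinearMap.mem_ker.mpr (h i j y hy)
  simpa using hle hx

lemma slf_of_corners (hW : IsAUFWitness R E) (ψ : R →ₗ[ℂ] ℂ)
    (h : ∀ (i j k l : I) (x y : R), E i * x * E j = x → E k * y * E l = y →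
      ψ (x * y) = ψ (y * x)) :
    IsSLF R ψ := by
  set B : R →ₗ[ℂ] R →ₗ[ℂ] ℂ := LinearMap.mk₂ ℂ (fun x y => ψ (x * y) - ψ (y * x))
    (by intro m₁ m₂ n; simp [add_mul, mul_add]; ring)
    (by intro c m n; simp [smul_mul_assoc, mul_smul_comm]; ring)
    (by intro m n₁ n₂; simp [add_mul, mul_add]; ring)
    (by intro c m n; simp [smul_mul_assoc, mul_smul_comm]; ring) with hB
  have hBapp : ∀ x y : R, B x y = ψ (x * y) - ψ (y * x) := fun x y => rfl
  have hBzero : B = 0 := by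
    have hle : (⨆ i, ⨆ j, subCorner R (E i) (E j)) ≤ LinearMap.ker B := by
      refine iSup_le fun i => iSup_le fun j => fun x hx => ?_
      rw [LinearMap.mem_ker]
      have hle2 : (⨆ k, ⨆ l, subCorner R (E k) (E l)) ≤ LinearMap.ker (B x) := by
        refine iSup_le fun k => iSup_le fun l => fun y hy => ?_
        rw [LinearMap.mem_ker, hBapp, h i j k l x y hx hy, sub_self]
      ext y
      have hy : y ∈ (⊤ : Submodule ℂ R) := trivial
      rw [← hW.2.2.2] at hy
      simpa using hle2 hy
    ext x y
    have hx : x ∈ (⊤ : Submodule ℂ R) := trivial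
    rw [← hW.2.2.2] at hx
    have := hle hx
    rw [LinearMap.mem_ker] at this
    simp [this]
  intro x y
  have h0 : B x y = 0 := by rw [hBzero]; rfl
  rw [hBapp] at h0
  exact sub_eq_zero.mp h0

end Aux3

section Aux4
variable {R : Type u} [NonUnitalRing R] [Module ℂ R] [SMulCommClass ℂ R R] [IsScalarTower ℂ R R]

lemma corner_left {f f' x : R} (hf : IsIdem R f) (hx : f * x * f' = x) : f * x = x := by
  conv_lhs => rw [← hx]
  calc f * (f * x * f') = (f * f) * x * f' := by noncomm_ring
  _ = f * x * f' := by rw [hf]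
  _ = x := hx

lemma corner_right {f f' x : R} (hf' : IsIdem R f') (hx : f * x * f' = x) : x * f' = x := by
  conv_lhs => rw [← hx]
  calc f * x * f' * f' = f * x * (f' * f') := by noncomm_ring
  _ = f * x * f' := by rw [hf']
  _ = x := hx

variable {I : Type v} {E : I → R}

lemma exists_rep (hW : IsAUFWitness R E) (x : R) :
    ∃ (s : Finset (I × I)) (g : I × I → R),
      (∀ μ ∈ s, E μ.1 * g μ * E μ.2 = g μ) ∧ x = ∑ μ ∈ s, g μ := by
  classical
  have hx : x ∈ (⨆ μ : I × I, subCorner R (E μ.1) (E μ.2)) := by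
    rw [corner_top hW]; trivial
  rw [Submodule.mem_iSup_iff_exists_finsupp] at hx
  obtain ⟨g, hg, hgsum⟩ := hx
  exact ⟨g.support, fun μ => g μ, fun μ _ => hg μ, by rw [← hgsum]; rfl⟩

lemma corner_fd_of_idem (hW : IsAUFWitness R E) (e : R) (he : IsIdem R e) :
    FiniteDimensional ℂ (subCorner R e e) := by
  classical
  obtain ⟨s, g, hg, hgsum⟩ := exists_rep hW e
  set W : Submodule ℂ R := (s ×ˢ s).sup (fun μν => subCorner R (E μν.1.1) (E μν.2.2)) with hWdef
  have hWfd : FiniteDimensional ℂ W := by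
    haveI := hW.2.2.1
    exact Submodule.finiteDimensional_finset_sup _ _
  have hle : subCorner R e e ≤ W := by
    intro x hx
    rw [mem_subCorner] at hx
    have hxe : x = ∑ μ ∈ s, ∑ ν ∈ s, g μ * x * g ν := by
      calc x = e * x * e := hx.symm
      _ = (∑ μ ∈ s, g μ) * x * (∑ ν ∈ s, g ν) := by rw [← hgsum]
      _ = ∑ μ ∈ s, (g μ * x * (∑ ν ∈ s, g ν)) := by rw [Finset.sum_mul, Finset.sum_mul]
      _ = ∑ μ ∈ s, ∑ ν ∈ s, g μ * x * g ν :=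
          Finset.sum_congr rfl fun μ _ => Finset.mul_sum _ _ _
    rw [hxe]
    refine Submodule.sum_mem _ fun μ hμ => Submodule.sum_mem _ fun ν hν => ?_
    have hmem : g μ * x * g ν ∈ subCorner R (E μ.1) (E ν.2) := by
      rw [mem_subCorner]
      calc E μ.1 * (g μ * x * g ν) * E ν.2 = (E μ.1 * g μ) * x * (g ν * E ν.2) := by noncomm_ring
      _ = g μ * x * g ν := by
          rw [corner_left (hW.1 μ.1) (hg μ hμ), corner_right (hW.1 ν.2) (hg ν hν)]
    exact (Finset.le_sup (f := fun μν => subCorner R (E μν.1.1) (E μν.2.2))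
      (Finset.mk_mem_product hμ hν) : subCorner R (E μ.1) (E ν.2) ≤ W) hmem
  exact Submodule.finiteDimensional_of_le hle

end Aux4

section Aux5
variable {A : Type u} [NonUnitalRing A] [Module ℂ A] [SMulCommClass ℂ A A] [IsScalarTower ℂ A A]
variable {n : ℕ}

lemma diag_corner_entry {e : A} {X : Matrix (Fin n) (Fin n) A}
    (hX : (Matrix.diagonal fun _ => e) * X * (Matrix.diagonal fun _ => e) = X) (k l : Fin n) :
    e * X k l * e = X k l := by
  conv_rhs => rw [← hX]
  rw [Matrix.mul_diagonal, Matrix.diagonal_mul]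

lemma matrix_corner_fd (e : A) (hfd : FiniteDimensional ℂ (subCorner A e e)) :
    FiniteDimensional ℂ (subCorner (Matrix (Fin n) (Fin n) A)
      (Matrix.diagonal fun _ => e) (Matrix.diagonal fun _ => e)) := by
  classical
  set Φ : (subCorner (Matrix (Fin n) (Fin n) A)
      (Matrix.diagonal fun _ => e) (Matrix.diagonal fun _ => e)) →ₗ[ℂ]
      (Fin n → Fin n → subCorner A e e) :=
    { toFun := fun X => fun k l => ⟨X.1 k l, diag_corner_entry X.2 k l⟩
      map_add' := by intro X Y; funext k l; exact Subtype.ext rfl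
      map_smul' := by intro c X; funext k l; exact Subtype.ext rfl } with hΦ
  have hinj : Function.Injective Φ := by
    intro X Y h
    apply Subtype.ext
    ext k l
    have := congrFun (congrFun h k) l
    exact congrArg Subtype.val this
  exact FiniteDimensional.of_injective Φ hinj

end Aux5

section Aux6
variable {A : Type u} [NonUnitalRing A] [Module ℂ A] [SMulCommClass ℂ A A] [IsScalarTower ℂ A A]
variable {n : ℕ}

local notation "Mat" => Matrix (Fin n) (Fin n) A

lemma E_idem {e : A} (he : IsIdem A e) :
    IsIdem Mat (Matrix.diagonal fun _ => e) := by
  show _ = _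
  have h2 : (fun _ : Fin n => e * e) = fun _ => e := funext fun _ => he
  rw [Matrix.diagonal_mul_diagonal, h2]

lemma SB_mul_diag (x e : A) (i j : Fin n) :
    Matrix.single i j x * (Matrix.diagonal fun _ => e) =
      Matrix.single i j (x * e) := by
  ext k l
  rw [Matrix.mul_diagonal]
  by_cases h : i = k ∧ j = l
  · obtain ⟨rfl, rfl⟩ := h
    simp
  · rw [Matrix.single_apply_of_ne _ _ _ _ _ h, Matrix.single_apply_of_ne _ _ _ _ _ h,
      zero_mul]

lemma diag_mul_SB (x e : A) (i j : Fin n) :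
    (Matrix.diagonal fun _ => e) * Matrix.single i j x =
      Matrix.single i j (e * x) := by
  ext k l
  rw [Matrix.diagonal_mul]
  by_cases h : i = k ∧ j = l
  · obtain ⟨rfl, rfl⟩ := h
    simp
  · rw [Matrix.single_apply_of_ne _ _ _ _ _ h, Matrix.single_apply_of_ne _ _ _ _ _ h,
      mul_zero]

lemma sum_diag_SB (e : A) :
    (∑ k : Fin n, Matrix.single k k e) = (Matrix.diagonal fun _ => e) := by
  ext i j
  rw [Matrix.sum_apply]
  by_cases h : i = j
  · subst h
    rw [Finset.sum_eq_single i]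
    · simp
    · intro k _ hk
      exact Matrix.single_apply_of_ne _ _ _ _ _ (fun hc => hk hc.1)
    · intro hk; exact absurd (Finset.mem_univ i) hk
  · rw [Matrix.diagonal_apply_ne _ h]
    refine Finset.sum_eq_zero fun k _ => ?_
    refine Matrix.single_apply_of_ne _ _ _ _ _ ?_
    rintro ⟨rfl, rfl⟩
    exact h rfl

/-- The std basis embedding as a linear map. -/
noncomputable def SBlin (i j : Fin n) : A →ₗ[ℂ] Mat where
  toFun x := Matrix.single i j x
  map_add' x y := by
    ext k l
    by_cases h : i = k ∧ j = l
    · obtain ⟨rfl, rfl⟩ := h; simp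
    · simp only [Matrix.add_apply, Matrix.single_apply_of_ne _ _ _ _ _ h, add_zero]
  map_smul' c x := by
    ext k l
    by_cases h : i = k ∧ j = l
    · obtain ⟨rfl, rfl⟩ := h; simp
    · simp only [Matrix.smul_apply, Matrix.single_apply_of_ne _ _ _ _ _ h, smul_zero,
        RingHom.id_apply]

variable {p : Matrix (Fin n) (Fin n) A}

lemma B_mem_iff {X : Mat} : X ∈ subCorner Mat p p ↔ p * X * p = X := Iff.rfl

lemma B_mul_mem (hpp : IsIdem Mat p) {X Y : Mat} (hX : X ∈ subCorner Mat p p)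
    (hY : Y ∈ subCorner Mat p p) : X * Y ∈ subCorner Mat p p := by
  rw [B_mem_iff] at hX hY ⊢
  calc p * (X * Y) * p = (p * X) * (Y * p) := by noncomm_ring
  _ = X * Y := by rw [corner_left hpp hX, corner_right hpp hY]

lemma phiM_mem (hpp : IsIdem Mat p) (b' a' : Mat) (X : Mat) :
    (p * b') * X * (a' * p) ∈ subCorner Mat p p := by
  rw [B_mem_iff]
  calc p * (p * b' * X * (a' * p)) * p = (p * p) * b' * X * (a' * (p * p)) := by noncomm_ring
  _ = p * b' * X * (a' * p) := by rw [hpp]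

/-- The extension `φ_M` of `φ` to all matrices. -/
noncomputable def phiM (hpp : IsIdem Mat p) (m : ℕ) (a b : Fin m → Mat)
    (φ : ↥(subCorner Mat p p) →ₗ[ℂ] ℂ) : Mat →ₗ[ℂ] ℂ :=
  ∑ t, φ.comp (LinearMap.codRestrict (subCorner Mat p p)
    ((LinearMap.mulRight ℂ (a t * p)).comp (LinearMap.mulLeft ℂ (p * b t)))
    (fun X => phiM_mem hpp (b t) (a t) X))

lemma phiM_apply (hpp : IsIdem Mat p) (m : ℕ) (a b : Fin m → Mat)
    (φ : ↥(subCorner Mat p p) →ₗ[ℂ] ℂ) (X : Mat) :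
    phiM hpp m a b φ X = ∑ t, φ ⟨(p * b t) * X * (a t * p), phiM_mem hpp (b t) (a t) X⟩ := by
  rw [phiM, LinearMap.sum_apply]
  rfl

end Aux6

section Aux7
variable {A : Type u} [NonUnitalRing A] [Module ℂ A] [SMulCommClass ℂ A A] [IsScalarTower ℂ A A]
variable {n : ℕ} {e : A} {p : Matrix (Fin n) (Fin n) A}

local notation "Mat" => Matrix (Fin n) (Fin n) A
local notation "Ediag" => (Matrix.diagonal fun _ : Fin n => e)
local notation "BB" => subCorner (Matrix (Fin n) (Fin n) A) p p

variable (he : IsIdem A e) (hpp : IsIdem (Matrix (Fin n) (Fin n) A) p)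
variable (hpE : (Matrix.diagonal fun _ : Fin n => e) * p * (Matrix.diagonal fun _ : Fin n => e) = p)
variable {m : ℕ} {a b : Fin m → Matrix (Fin n) (Fin n) A}
variable (hab : (∑ t, a t * p * b t) = (Matrix.diagonal fun _ : Fin n => e))
variable (φ : ↥(subCorner (Matrix (Fin n) (Fin n) A) p p) →ₗ[ℂ] ℂ)
variable (hφ : ∀ (bq c : Matrix (Fin n) (Fin n) A)
  (hb : bq ∈ subCorner (Matrix (Fin n) (Fin n) A) p p)
  (hc : c ∈ subCorner (Matrix (Fin n) (Fin n) A) p p)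
  (hbc : bq * c ∈ subCorner (Matrix (Fin n) (Fin n) A) p p)
  (hcb : c * bq ∈ subCorner (Matrix (Fin n) (Fin n) A) p p),
  φ ⟨bq * c, hbc⟩ = φ ⟨c * bq, hcb⟩)

lemma phi_sum_eq {k : ℕ} (Z : Fin k → Mat) (hZ : ∀ r, Z r ∈ BB) {S : Mat} (hS : S ∈ BB)
    (hsum : (∑ r, Z r) = S) : (∑ r, φ ⟨Z r, hZ r⟩) = φ ⟨S, hS⟩ := by
  have h1 : (∑ r, (⟨Z r, hZ r⟩ : BB)) = ⟨S, hS⟩ := by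
    apply Subtype.ext
    push_cast
    exact hsum
  rw [← h1, map_sum]

include hpp hφ in
lemma phi_swap (U V : Mat) (hU : U ∈ BB) (hV : V ∈ BB) :
    φ ⟨U * V, B_mul_mem hpp hU hV⟩ = φ ⟨V * U, B_mul_mem hpp hV hU⟩ :=
  hφ U V hU hV _ _

include he hpp hpE hab hφ in
lemma phiM_on_B (X : Mat) (hX : X ∈ BB) : phiM hpp m a b φ X = φ ⟨X, hX⟩ := by
  have hXc : p * X * p = X := hX
  have hEp : Ediag * p = p := corner_left (E_idem he) hpE
  have hpE2 : p * Ediag = p := corner_right (E_idem he) hpE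
  rw [phiM_apply]
  have key : ∀ t : Fin m,
      (p * b t) * X * (a t * p) = (p * b t * p) * (X * (p * a t * p)) := by
    intro t
    conv_lhs => rw [← hXc]
    noncomm_ring
  have memU : ∀ t : Fin m, p * b t * p ∈ BB := by
    intro t
    show p * (p * b t * p) * p = p * b t * p
    calc p * (p * b t * p) * p = (p * p) * b t * (p * p) := by noncomm_ring
    _ = p * b t * p := by rw [hpp]
  have memV : ∀ t : Fin m, X * (p * a t * p) ∈ BB := fun t =>
    B_mul_mem hpp hX (by
      show p * (p * a t * p) * p = p * a t * p
      calc p * (p * a t * p) * p = (p * p) * a t * (p * p) := by noncomm_ring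
      _ = p * a t * p := by rw [hpp])
  calc (∑ t, φ ⟨(p * b t) * X * (a t * p), phiM_mem hpp (b t) (a t) X⟩)
      = ∑ t, φ ⟨(p * b t * p) * (X * (p * a t * p)), B_mul_mem hpp (memU t) (memV t)⟩ := by
        refine Finset.sum_congr rfl fun t _ => congrArg φ (Subtype.ext ?_)
        exact key t
  _ = ∑ t, φ ⟨(X * (p * a t * p)) * (p * b t * p), B_mul_mem hpp (memV t) (memU t)⟩ := by
        refine Finset.sum_congr rfl fun t _ => ?_
        exact phi_swap hpp φ hφ _ _ (memU t) (memV t)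
  _ = φ ⟨X, hX⟩ := by
        refine phi_sum_eq φ _ _ hX ?_
        have hterm : ∀ t : Fin m,
            (X * (p * a t * p)) * (p * b t * p) = X * (p * (a t * p * b t) * p) := by
          intro t
          calc (X * (p * a t * p)) * (p * b t * p)
              = X * (p * (a t * (p * p) * b t) * p) := by noncomm_ring
          _ = X * (p * (a t * p * b t) * p) := by rw [hpp]
        calc (∑ t, (X * (p * a t * p)) * (p * b t * p))
            = ∑ t, X * (p * (a t * p * b t) * p) := Finset.sum_congr rfl fun t _ => hterm t
        _ = X * (p * (∑ t, a t * p * b t) * p) := by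
            simp only [Finset.mul_sum, Finset.sum_mul]
        _ = X * (p * Ediag * p) := by rw [hab]
        _ = X * p := by rw [hpE2, hpp]
        _ = X := corner_right hpp hXc

include he hpp hpE hab hφ in
lemma phiM_sym (X Y : Mat) (hX1 : X * Ediag = X) (hY1 : Ediag * Y = Y)
    (h3 : Ediag * X = X ∨ Y * Ediag = Y) :
    phiM hpp m a b φ (X * Y) = phiM hpp m a b φ (Y * X) := by
  have hYEX : Y * Ediag * X = Y * X := by
    rcases h3 with h | h
    · rw [mul_assoc, h]
    · rw [h]
  have hXY : X * Y = ∑ r, X * a r * p * b r * Y := by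
    conv_lhs => rw [← hX1, ← hab]
    rw [Finset.mul_sum, Finset.sum_mul]
    refine Finset.sum_congr rfl fun r _ => by noncomm_ring
  rw [phiM_apply, phiM_apply]
  have hterm : ∀ t r : Fin m, (p * b t) * (X * a r * p * b r * Y) * (a t * p) =
      ((p * b t) * X * (a r * p)) * ((p * b r) * Y * (a t * p)) := by
    intro t r
    calc (p * b t) * (X * a r * p * b r * Y) * (a t * p)
        = p * b t * X * a r * (p * p) * b r * Y * (a t * p) := by rw [hpp]; noncomm_ring
    _ = ((p * b t) * X * (a r * p)) * ((p * b r) * Y * (a t * p)) := by noncomm_ring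
  have hsum1 : ∀ t, (∑ r, ((p * b t) * X * (a r * p)) * ((p * b r) * Y * (a t * p))) =
      (p * b t) * (X * Y) * (a t * p) := by
    intro t
    conv_rhs => rw [hXY]
    rw [Finset.mul_sum, Finset.sum_mul]
    exact Finset.sum_congr rfl fun r _ => (hterm t r).symm
  calc (∑ t, φ ⟨(p * b t) * (X * Y) * (a t * p), phiM_mem hpp (b t) (a t) (X * Y)⟩)
      = ∑ t, ∑ r, φ ⟨((p * b t) * X * (a r * p)) * ((p * b r) * Y * (a t * p)),
          B_mul_mem hpp (phiM_mem hpp (b t) (a r) X) (phiM_mem hpp (b r) (a t) Y)⟩ := by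
        refine Finset.sum_congr rfl fun t _ => ?_
        exact (phi_sum_eq φ _ _ (phiM_mem hpp (b t) (a t) (X * Y)) (hsum1 t)).symm
  _ = ∑ t, ∑ r, φ ⟨((p * b r) * Y * (a t * p)) * ((p * b t) * X * (a r * p)),
          B_mul_mem hpp (phiM_mem hpp (b r) (a t) Y) (phiM_mem hpp (b t) (a r) X)⟩ := by
        refine Finset.sum_congr rfl fun t _ => Finset.sum_congr rfl fun r _ => ?_
        exact phi_swap hpp φ hφ _ _ (phiM_mem hpp (b t) (a r) X) (phiM_mem hpp (b r) (a t) Y)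
  _ = ∑ r, ∑ t, φ ⟨((p * b r) * Y * (a t * p)) * ((p * b t) * X * (a r * p)),
          B_mul_mem hpp (phiM_mem hpp (b r) (a t) Y) (phiM_mem hpp (b t) (a r) X)⟩ :=
        Finset.sum_comm
  _ = ∑ r, φ ⟨(p * b r) * (Y * X) * (a r * p), phiM_mem hpp (b r) (a r) (Y * X)⟩ := by
        refine Finset.sum_congr rfl fun r _ => ?_
        refine phi_sum_eq φ _ _ (phiM_mem hpp (b r) (a r) (Y * X)) ?_
        have hterm2 : ∀ t : Fin m,
            ((p * b r) * Y * (a t * p)) * ((p * b t) * X * (a r * p)) =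
            (p * b r) * (Y * (a t * p * b t) * X) * (a r * p) := by
          intro t
          calc ((p * b r) * Y * (a t * p)) * ((p * b t) * X * (a r * p))
              = (p * b r) * (Y * (a t * (p * p) * b t) * X) * (a r * p) := by noncomm_ring
          _ = (p * b r) * (Y * (a t * p * b t) * X) * (a r * p) := by rw [hpp]
        calc (∑ t, ((p * b r) * Y * (a t * p)) * ((p * b t) * X * (a r * p)))
            = ∑ t, (p * b r) * (Y * (a t * p * b t) * X) * (a r * p) :=
              Finset.sum_congr rfl fun t _ => hterm2 t
        _ = (p * b r) * (Y * (∑ t, a t * p * b t) * X) * (a r * p) := by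
              simp only [Finset.mul_sum, Finset.sum_mul]
        _ = (p * b r) * (Y * X) * (a r * p) := by rw [hab, hYEX]

include he hpp hpE hab hφ in
lemma psi0_sym (i0 : Fin n) (u v : A) (hue : u * e = u) (hev : e * v = v)
    (h3 : e * u = u ∨ v * e = v) :
    phiM hpp m a b φ (Matrix.single i0 i0 (u * v)) =
      phiM hpp m a b φ (Matrix.single i0 i0 (v * u)) := by
  have h1 : Matrix.single i0 i0 u * Matrix.single i0 i0 v
      = Matrix.single i0 i0 (u * v) := Matrix.single_mul_single_same _ _ _ _ _
  have h2 : Matrix.single i0 i0 v * Matrix.single i0 i0 u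
      = Matrix.single i0 i0 (v * u) := Matrix.single_mul_single_same _ _ _ _ _
  rw [← h1, ← h2]
  refine phiM_sym he hpp hpE hab φ hφ _ _ ?_ ?_ ?_
  · rw [SB_mul_diag, hue]
  · rw [diag_mul_SB, hev]
  · rcases h3 with h | h
    · left; rw [diag_mul_SB, h]
    · right; rw [SB_mul_diag, h]

include he hpp hpE hab hφ in
lemma trace_phiM (i0 : Fin n) (X : Matrix (Fin n) (Fin n) A) (hX : X ∈ BB) :
    (∑ k, phiM hpp m a b φ (Matrix.single i0 i0 (X k k))) = φ ⟨X, hX⟩ := by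
  have hXc : p * X * p = X := hX
  have hEi : IsIdem Mat Ediag := E_idem he
  have hEp : Ediag * p = p := corner_left hEi hpE
  have hpE2 : p * Ediag = p := corner_right hEi hpE
  have hXM : Ediag * X * Ediag = X := by
    conv_lhs => rw [← hXc]
    calc Ediag * (p * X * p) * Ediag = (Ediag * p) * X * (p * Ediag) := by noncomm_ring
    _ = p * X * p := by rw [hEp, hpE2]
    _ = X := hXc
  have hXE : X * Ediag = X := corner_right hEi hXM
  have hEX : Ediag * X = X := corner_left hEi hXM
  have key1 : ∀ k, Matrix.single i0 i0 (X k k) =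
      (Matrix.single i0 k e * X) * Matrix.single k i0 e := by
    intro k
    ext i j
    by_cases hi : i = i0
    · subst hi
      by_cases hj : j = i
      · subst hj
        rw [Matrix.single_apply_same,
          Matrix.mul_single_apply_same,
          Matrix.single_mul_apply_same]
        exact (diag_corner_entry hXM _ _).symm
      · rw [Matrix.single_apply_of_ne _ _ _ _ _ (fun hc => hj hc.2.symm),
          Matrix.mul_single_apply_of_ne _ _ _ _ _ (fun hc => hj (by rw [hc]))]
    · rw [Matrix.single_apply_of_ne _ _ _ _ _ (fun hc => hi hc.1.symm),
        Matrix.mul_apply]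
      refine (Finset.sum_eq_zero fun l _ => ?_).symm
      rw [Matrix.single_mul_apply_of_ne _ _ _ _ _ hi, zero_mul]
  have key2 : ∀ k, phiM hpp m a b φ ((Matrix.single i0 k e * X) *
      Matrix.single k i0 e) = phiM hpp m a b φ (Matrix.single k k e * X) := by
    intro k
    have hswap := phiM_sym he hpp hpE hab φ hφ (Matrix.single i0 k e * X)
      (Matrix.single k i0 e)
      (by rw [mul_assoc, hXE])
      (by rw [diag_mul_SB, he])
      (by
        left
        rw [← mul_assoc, diag_mul_SB, he])
    rw [hswap]
    congr 1
    rw [← mul_assoc, Matrix.single_mul_single_same _ _ _ _ _, he]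
  calc (∑ k, phiM hpp m a b φ (Matrix.single i0 i0 (X k k)))
      = ∑ k, phiM hpp m a b φ (Matrix.single k k e * X) := by
        refine Finset.sum_congr rfl fun k _ => ?_
        rw [key1 k, key2 k]
  _ = phiM hpp m a b φ (∑ k, Matrix.single k k e * X) := (map_sum _ _ _).symm
  _ = phiM hpp m a b φ X := by rw [← Finset.sum_mul, sum_diag_SB, hEX]
  _ = φ ⟨X, hX⟩ := phiM_on_B he hpp hpE hab φ hφ X hX

end Aux7




/-- Let `A` be AUF with generating idempotent `e`, let `n ≥ 1`, and let `p` be a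
generating idempotent of the corner `M_n(eAe)` of `M_n(A)` at the diagonal idempotent
`E = diag(e, …, e)`.  Set `B = p M_n(eAe) p`.  Then `Θ : ψ ↦ (b ↦ Σ_k ψ(b_{kk}))` is a
well-defined ℂ-linear bijection from `SLF(A)` onto `SLF(B)`. -/
theorem stmt_15 {A : Type u} [NonUnitalRing A] [Module ℂ A] [SMulCommClass ℂ A A]
    [IsScalarTower ℂ A A] (hA : IsAUF A) (e : A) (hgen : IsGenIdem A e)
    (n : ℕ) (hn : 1 ≤ n) (p : Matrix (Fin n) (Fin n) A)
    (hp : IsGenIdemIn (Matrix (Fin n) (Fin n) A) (Matrix.diagonal fun _ => e) p) :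
    (∀ ψ : A →ₗ[ℂ] ℂ, IsSLF A ψ →
      ∀ (b c : Matrix (Fin n) (Fin n) A)
        (hb : b ∈ subCorner (Matrix (Fin n) (Fin n) A) p p)
        (hc : c ∈ subCorner (Matrix (Fin n) (Fin n) A) p p)
        (hbc : b * c ∈ subCorner (Matrix (Fin n) (Fin n) A) p p)
        (hcb : c * b ∈ subCorner (Matrix (Fin n) (Fin n) A) p p),
        Theta p ψ ⟨b * c, hbc⟩ = Theta p ψ ⟨c * b, hcb⟩) ∧
    (∀ ψ₁ ψ₂ : A →ₗ[ℂ] ℂ, Theta p (ψ₁ + ψ₂) = Theta p ψ₁ + Theta p ψ₂) ∧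
    (∀ (c : ℂ) (ψ : A →ₗ[ℂ] ℂ), Theta p (c • ψ) = c • Theta p ψ) ∧
    (∀ ψ₁ ψ₂ : A →ₗ[ℂ] ℂ, IsSLF A ψ₁ → IsSLF A ψ₂ → Theta p ψ₁ = Theta p ψ₂ → ψ₁ = ψ₂) ∧
    (∀ φ : ↥(subCorner (Matrix (Fin n) (Fin n) A) p p) →ₗ[ℂ] ℂ,
      (∀ (b c : Matrix (Fin n) (Fin n) A)
        (hb : b ∈ subCorner (Matrix (Fin n) (Fin n) A) p p)
        (hc : c ∈ subCorner (Matrix (Fin n) (Fin n) A) p p)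
        (hbc : b * c ∈ subCorner (Matrix (Fin n) (Fin n) A) p p)
        (hcb : c * b ∈ subCorner (Matrix (Fin n) (Fin n) A) p p),
        φ ⟨b * c, hbc⟩ = φ ⟨c * b, hcb⟩) →
      ∃ ψ : A →ₗ[ℂ] ℂ, IsSLF A ψ ∧ Theta p ψ = φ) := by
  classical
  have hT : ∀ (ψ : A →ₗ[ℂ] ℂ) (z : ↥(subCorner (Matrix (Fin n) (Fin n) A) p p)),
      Theta p ψ z = ∑ k, ψ (z.1 k k) := fun _ _ => rfl
  obtain ⟨I, EA, hW⟩ := hA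
  have he : IsIdem A e := hgen.1
  have hEfd : FiniteDimensional ℂ (subCorner A e e) := corner_fd_of_idem hW e he
  have hpp : IsIdem (Matrix (Fin n) (Fin n) A) p := hp.1.1
  have hpE : (Matrix.diagonal fun _ : Fin n => e) * p * (Matrix.diagonal fun _ : Fin n => e)
      = p := hp.1.2
  have hEi : IsIdem (Matrix (Fin n) (Fin n) A) (Matrix.diagonal fun _ : Fin n => e) :=
    E_idem he
  have hMfd : FiniteDimensional ℂ (subCorner (Matrix (Fin n) (Fin n) A)
      (Matrix.diagonal fun _ : Fin n => e) (Matrix.diagonal fun _ : Fin n => e)) :=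
    matrix_corner_fd e hEfd
  obtain ⟨mE, aM, bM, haM, hbM, habM⟩ := fullnessIn hEi hp hMfd
  choose mm aa bb haa hbb hab2 using fun i : I => fullness hgen (EA i) (hW.1 i) (hW.2.2.1 i i)
  set i0 : Fin n := ⟨0, hn⟩ with hi0
  refine ⟨?_, ?_, ?_, ?_, ?_⟩
  · -- well-definedness
    intro ψ hψ b c hb hc hbc hcb
    rw [hT, hT]
    calc (∑ k, ψ ((b * c) k k)) = ∑ k, ∑ j, ψ (b k j * c j k) := by
          refine Finset.sum_congr rfl fun k _ => ?_
          rw [Matrix.mul_apply, map_sum]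
    _ = ∑ k, ∑ j, ψ (c j k * b k j) :=
          Finset.sum_congr rfl fun k _ => Finset.sum_congr rfl fun j _ => hψ _ _
    _ = ∑ j, ∑ k, ψ (c j k * b k j) := Finset.sum_comm
    _ = ∑ j, ψ ((c * b) j j) := by
          refine Finset.sum_congr rfl fun j _ => ?_
          rw [Matrix.mul_apply, map_sum]
  · -- additivity
    intro ψ₁ ψ₂
    apply LinearMap.ext
    intro x
    rw [LinearMap.add_apply, hT, hT, hT]
    simp only [LinearMap.add_apply, Finset.sum_add_distrib]
  · -- smul
    intro c ψ
    apply LinearMap.ext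
    intro x
    rw [LinearMap.smul_apply, hT, hT]
    simp only [LinearMap.smul_apply, smul_eq_mul, Finset.mul_sum]
  · -- injectivity
    intro ψ₁ ψ₂ hψ₁ hψ₂ hTheta
    set δ : A →ₗ[ℂ] ℂ := ψ₁ - ψ₂ with hδ
    have hδSLF : ∀ x y : A, δ (x * y) = δ (y * x) := by
      intro x y
      simp only [hδ, LinearMap.sub_apply, hψ₁ x y, hψ₂ x y]
    set T : Matrix (Fin n) (Fin n) A → ℂ := fun X => ∑ k, δ (X k k) with hTdef
    have hδB : ∀ Z (hZ : Z ∈ subCorner (Matrix (Fin n) (Fin n) A) p p), T Z = 0 := by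
      intro Z hZ
      have h1 := DFunLike.congr_fun hTheta (⟨Z, hZ⟩ : ↥(subCorner (Matrix (Fin n) (Fin n) A) p p))
      rw [hT, hT] at h1
      simp only [hTdef, hδ, LinearMap.sub_apply, Finset.sum_sub_distrib, h1, sub_self]
    have hTsym : ∀ X Y : Matrix (Fin n) (Fin n) A, T (X * Y) = T (Y * X) := by
      intro X Y
      calc T (X * Y) = ∑ k, ∑ j, δ (X k j * Y j k) := by
            refine Finset.sum_congr rfl fun k _ => ?_
            rw [Matrix.mul_apply, map_sum]
      _ = ∑ k, ∑ j, δ (Y j k * X k j) :=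
            Finset.sum_congr rfl fun k _ => Finset.sum_congr rfl fun j _ => hδSLF _ _
      _ = ∑ j, ∑ k, δ (Y j k * X k j) := Finset.sum_comm
      _ = T (Y * X) := by
            refine Finset.sum_congr rfl fun j _ => ?_
            rw [Matrix.mul_apply, map_sum]
    have hTsum : ∀ (k : ℕ) (Z : Fin k → Matrix (Fin n) (Fin n) A),
        T (∑ r, Z r) = ∑ r, T (Z r) := by
      intro k Z
      calc T (∑ r, Z r) = ∑ l, δ (∑ r, Z r l l) := by
            refine Finset.sum_congr rfl fun l _ => congrArg δ ?_
            rw [Matrix.sum_apply]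
      _ = ∑ l, ∑ r, δ (Z r l l) := Finset.sum_congr rfl fun l _ => map_sum δ _ _
      _ = ∑ r, ∑ l, δ (Z r l l) := Finset.sum_comm
      _ = ∑ r, T (Z r) := rfl
    have hTM : ∀ X : Matrix (Fin n) (Fin n) A,
        (Matrix.diagonal fun _ : Fin n => e) * X = X → T X = 0 := by
      intro X hEX
      have hXrep : X = ∑ t, (aM t * p) * ((p * bM t) * X) := by
        conv_lhs => rw [← hEX, ← habM]
        rw [Finset.sum_mul]
        refine Finset.sum_congr rfl fun t _ => ?_
        calc (aM t * p * bM t) * X = aM t * (p * p) * bM t * X := by rw [hpp]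
        _ = (aM t * p) * ((p * bM t) * X) := by noncomm_ring
      calc T X = ∑ t, T ((aM t * p) * ((p * bM t) * X)) := by
            conv_lhs => rw [hXrep]
            exact hTsum mE _
      _ = ∑ t, T (((p * bM t) * X) * (aM t * p)) :=
            Finset.sum_congr rfl fun t _ => hTsym _ _
      _ = 0 := Finset.sum_eq_zero fun t _ => hδB _ (phiM_mem hpp (bM t) (aM t) X)
    have hδe : ∀ x : A, e * x * e = x → δ x = 0 := by
      intro x hx
      have hEX : (Matrix.diagonal fun _ : Fin n => e) * Matrix.single i0 i0 x =
          Matrix.single i0 i0 x := by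
        rw [diag_mul_SB, corner_left he hx]
      have hTX : T (Matrix.single i0 i0 x) = δ x := by
        calc T (Matrix.single i0 i0 x)
            = ∑ k, δ (Matrix.single i0 i0 x k k) := rfl
        _ = δ (Matrix.single i0 i0 x i0 i0) :=
            Finset.sum_eq_single_of_mem i0 (Finset.mem_univ i0) (fun k _ hk => by
              rw [Matrix.single_apply_of_ne _ _ _ _ _ (fun hc => hk hc.1.symm), map_zero])
        _ = δ x := by rw [Matrix.single_apply_same]
      rw [← hTX]
      exact hTM _ hEX
    have hδcorner : ∀ (i j : I) (x : A), EA i * x * EA j = x → δ x = 0 := by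
      intro i j x hx
      have hxr : x = ∑ s, aa i s * (bb i s * x) := by
        conv_lhs => rw [← corner_left (hW.1 i) hx, ← hab2 i]
        rw [Finset.sum_mul]
        refine Finset.sum_congr rfl fun s _ => by noncomm_ring
      calc δ x = ∑ s, δ (aa i s * (bb i s * x)) := by
            conv_lhs => rw [hxr]
            exact map_sum δ _ _
      _ = ∑ s, δ ((bb i s * x) * aa i s) := Finset.sum_congr rfl fun s _ => hδSLF _ _
      _ = 0 := by
            refine Finset.sum_eq_zero fun s _ => hδe _ ?_
            calc e * (bb i s * x * aa i s) * e = (e * bb i s) * x * (aa i s * e) := by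
                  noncomm_ring
            _ = bb i s * x * aa i s := by rw [hbb i s, haa i s]
    have hδ0 : δ = 0 := linmap_eq_zero hW δ hδcorner
    rw [← sub_eq_zero]
    exact hδ0
  · -- surjectivity
    intro φ hφ
    set Φ : Matrix (Fin n) (Fin n) A →ₗ[ℂ] ℂ := phiM hpp mE aM bM φ with hΦ
    set Ψ₀ : A →ₗ[ℂ] ℂ := Φ.comp (SBlin i0 i0) with hΨ₀
    have hΨ₀app : ∀ x : A, Ψ₀ x = Φ (Matrix.single i0 i0 x) := fun x => rfl
    have hΨsym : ∀ u v : A, u * e = u → e * v = v → (e * u = u ∨ v * e = v) →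
        Ψ₀ (u * v) = Ψ₀ (v * u) := by
      intro u v h1 h2 h3
      rw [hΨ₀app, hΨ₀app, hΦ]
      exact psi0_sym he hpp hpE habM φ hφ i0 u v h1 h2 h3
    set F : I × I → (A →ₗ[ℂ] ℂ) := fun μ =>
      if μ.1 = μ.2 then
        (∑ s, Ψ₀.comp ((LinearMap.mulRight ℂ (aa μ.1 s)).comp (LinearMap.mulLeft ℂ (bb μ.1 s))))
      else 0 with hF
    have hFdiag : ∀ (i : I) (x : A), F (i, i) x = ∑ s, Ψ₀ (bb i s * x * aa i s) := by
      intro i x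
      rw [hF]
      simp only [if_true, eq_self_iff_true, LinearMap.sum_apply, LinearMap.comp_apply,
        LinearMap.mulLeft_apply, LinearMap.mulRight_apply, mul_assoc]
    have hFoff : ∀ (i j : I) (x : A), i ≠ j → F (i, j) x = 0 := by
      intro i j x hij
      rw [hF]
      simp only [if_neg hij, LinearMap.zero_apply]
    obtain ⟨ψ, hψdef⟩ := exists_psi hW F
    have K2diag : ∀ (i : I) (x : A), EA i * x * EA i = x →
        ψ x = ∑ s, Ψ₀ (bb i s * x * aa i s) := by
      intro i x hx
      rw [hψdef (i, i) x hx]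
      exact hFdiag i x
    have K2off : ∀ (i j : I) (x : A),i ≠ j → EA i * x * EA j = x → ψ x = 0 := by
      intro i j x hij hx
      rw [hψdef (i, j) x hx]
      exact hFoff i j x hij
    have hSLF : IsSLF A ψ := by
      refine slf_of_corners hW ψ ?_
      intro i j k l x y hx hy
      by_cases hjk : j = k
      · subst hjk
        by_cases hli : l = i
        · have hli' : i = l := hli.symm
          subst hli'
          have hxyC : EA i * (x * y) * EA i = x * y := by
            calc EA i * (x * y) * EA i = (EA i * x) * (y * EA i) := by noncomm_ring
            _ = x * y := by rw [corner_left (hW.1 i) hx, corner_right (hW.1 i) hy]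
          have hyxC : EA j * (y * x) * EA j = y * x := by
            calc EA j * (y * x) * EA j = (EA j * y) * (x * EA j) := by noncomm_ring
            _ = y * x := by rw [corner_left (hW.1 j) hy, corner_right (hW.1 j) hx]
          rw [K2diag i _ hxyC, K2diag j _ hyxC]
          have hxy : x * y = ∑ t, (x * aa j t) * (bb j t * y) := by
            conv_lhs => rw [← corner_right (hW.1 j) hx, ← hab2 j]
            rw [Finset.mul_sum, Finset.sum_mul]
            exact Finset.sum_congr rfl fun t _ => by noncomm_ring
          calc (∑ s, Ψ₀ (bb i s * (x * y) * aa i s))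
              = ∑ s, ∑ t, Ψ₀ ((bb i s * (x * aa j t)) * ((bb j t * y) * aa i s)) := by
                refine Finset.sum_congr rfl fun s _ => ?_
                rw [hxy, Finset.mul_sum, Finset.sum_mul, map_sum]
                exact Finset.sum_congr rfl fun t _ => congrArg Ψ₀ (by noncomm_ring)
          _ = ∑ s, ∑ t, Ψ₀ (((bb j t * y) * aa i s) * (bb i s * (x * aa j t))) := by
                refine Finset.sum_congr rfl fun s _ => Finset.sum_congr rfl fun t _ => ?_
                refine hΨsym _ _ ?_ ?_ (Or.inl ?_)
                · calc (bb i s * (x * aa j t)) * e = bb i s * (x * (aa j t * e)) := by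
                        noncomm_ring
                  _ = bb i s * (x * aa j t) := by rw [haa j t]
                · calc e * ((bb j t * y) * aa i s) = (e * bb j t) * y * aa i s := by
                        noncomm_ring
                  _ = (bb j t * y) * aa i s := by rw [hbb j t]
                · calc e * (bb i s * (x * aa j t)) = (e * bb i s) * (x * aa j t) := by
                        noncomm_ring
                  _ = bb i s * (x * aa j t) := by rw [hbb i s]
          _ = ∑ t, ∑ s, Ψ₀ (((bb j t * y) * aa i s) * (bb i s * (x * aa j t))) :=
                Finset.sum_comm
          _ = ∑ t, Ψ₀ (bb j t * (y * x) * aa j t) := by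
                refine Finset.sum_congr rfl fun t _ => ?_
                rw [← map_sum]
                congr 1
                have hterm2 : ∀ s, ((bb j t * y) * aa i s) * (bb i s * (x * aa j t)) =
                    bb j t * (y * (aa i s * bb i s) * x) * aa j t := fun s => by noncomm_ring
                calc (∑ s, ((bb j t * y) * aa i s) * (bb i s * (x * aa j t)))
                    = ∑ s, bb j t * (y * (aa i s * bb i s) * x) * aa j t :=
                      Finset.sum_congr rfl fun s _ => hterm2 s
                _ = bb j t * (y * (∑ s, aa i s * bb i s) * x) * aa j t := by
                      simp only [Finset.mul_sum, Finset.sum_mul]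
                _ = bb j t * (y * x) * aa j t := by
                      rw [hab2 i, mul_assoc y (EA i) x, corner_left (hW.1 i) hx]
        · have hyx0 : y * x = 0 := by
            calc y * x = (y * EA l) * (EA i * x) := by
                  rw [corner_right (hW.1 l) hy, corner_left (hW.1 i) hx]
            _ = y * (EA l * EA i) * x := by noncomm_ring
            _ = 0 := by rw [(hW.2.1 l i hli).1]; simp
          have hxyC : EA i * (x * y) * EA l = x * y := by
            calc EA i * (x * y) * EA l = (EA i * x) * (y * EA l) := by noncomm_ring
            _ = x * y := by rw [corner_left (hW.1 i) hx, corner_right (hW.1 l) hy]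
          rw [K2off i l _ (fun hc => hli hc.symm) hxyC, hyx0, map_zero]
      · have hxy0 : x * y = 0 := by
          calc x * y = (x * EA j) * (EA k * y) := by
                rw [corner_right (hW.1 j) hx, corner_left (hW.1 k) hy]
          _ = x * (EA j * EA k) * y := by noncomm_ring
          _ = 0 := by rw [(hW.2.1 j k hjk).1]; simp
        by_cases hli : l = i
        · have hli' : i = l := hli.symm
          subst hli'
          have hyxC : EA k * (y * x) * EA j = y * x := by
            calc EA k * (y * x) * EA j = (EA k * y) * (x * EA j) := by noncomm_ring
            _ = y * x := by rw [corner_left (hW.1 k) hy, corner_right (hW.1 j) hx]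
          rw [hxy0, map_zero, K2off k j _ (fun hc => hjk hc.symm) hyxC]
        · have hyx0 : y * x = 0 := by
            calc y * x = (y * EA l) * (EA i * x) := by
                  rw [corner_right (hW.1 l) hy, corner_left (hW.1 i) hx]
            _ = y * (EA l * EA i) * x := by noncomm_ring
            _ = 0 := by rw [(hW.2.1 l i hli).1]; simp
          rw [hxy0, hyx0]
    obtain ⟨sE, gE, hgE, hgEsum⟩ := exists_rep hW e
    have hgEl : ∀ μ ∈ sE, EA μ.1 * gE μ = gE μ := fun μ hμ => corner_left (hW.1 μ.1) (hgE μ hμ)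
    have hgEr : ∀ μ ∈ sE, gE μ * EA μ.2 = gE μ := fun μ hμ => corner_right (hW.1 μ.2) (hgE μ hμ)
    have hterm : ∀ x : A, e * x * e = x → ∀ μ ∈ sE, ∀ ν ∈ sE,
        ψ (gE μ * x * gE ν) = Ψ₀ (x * (e * (gE ν * gE μ) * e)) := by
      intro x hx μ hμ ν hν
      by_cases hμν : μ.1 = ν.2
      · have hgνi : gE ν * EA μ.1 = gE ν := by
          rw [hμν]
          exact hgEr ν hν
        have hz : EA μ.1 * (gE μ * x * gE ν) * EA μ.1 = gE μ * x * gE ν := by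
          calc EA μ.1 * (gE μ * x * gE ν) * EA μ.1
              = (EA μ.1 * gE μ) * x * (gE ν * EA μ.1) := by noncomm_ring
          _ = gE μ * x * gE ν := by rw [hgEl μ hμ, hgνi]
        rw [K2diag μ.1 _ hz]
        have hstep : ∀ s, Ψ₀ (bb μ.1 s * (gE μ * x * gE ν) * aa μ.1 s) =
            Ψ₀ (x * ((e * gE ν * aa μ.1 s) * (bb μ.1 s * gE μ * e))) := by
          intro s
          have h1 : bb μ.1 s * (gE μ * x * gE ν) * aa μ.1 s =
              (bb μ.1 s * gE μ * e) * (x * (e * gE ν * aa μ.1 s)) := by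
            have hx2 : gE μ * x * gE ν = gE μ * (e * x * e) * gE ν := by rw [hx]
            rw [hx2]
            noncomm_ring
          rw [h1]
          have hue : (bb μ.1 s * gE μ * e) * e = bb μ.1 s * gE μ * e := by
            rw [mul_assoc, he]
          have hev : e * (x * (e * gE ν * aa μ.1 s)) = x * (e * gE ν * aa μ.1 s) := by
            calc e * (x * (e * gE ν * aa μ.1 s)) = (e * x) * (e * gE ν * aa μ.1 s) := by
                  noncomm_ring
            _ = x * (e * gE ν * aa μ.1 s) := by rw [corner_left he hx]
          have heu : e * (bb μ.1 s * gE μ * e) = bb μ.1 s * gE μ * e := by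
            calc e * (bb μ.1 s * gE μ * e) = (e * bb μ.1 s) * gE μ * e := by noncomm_ring
            _ = bb μ.1 s * gE μ * e := by rw [hbb μ.1 s]
          rw [hΨsym _ _ hue hev (Or.inl heu)]
          exact congrArg Ψ₀ (by noncomm_ring)
        calc (∑ s, Ψ₀ (bb μ.1 s * (gE μ * x * gE ν) * aa μ.1 s))
            = ∑ s, Ψ₀ (x * ((e * gE ν * aa μ.1 s) * (bb μ.1 s * gE μ * e))) :=
              Finset.sum_congr rfl fun s _ => hstep s
        _ = Ψ₀ (x * (e * gE ν * (∑ s, aa μ.1 s * bb μ.1 s) * gE μ * e)) := by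
              rw [← map_sum]
              congr 1
              simp only [Finset.mul_sum, Finset.sum_mul]
              exact Finset.sum_congr rfl fun s _ => by noncomm_ring
        _ = Ψ₀ (x * (e * (gE ν * gE μ) * e)) := by
              rw [hab2 μ.1]
              congr 1
              calc x * (e * gE ν * EA μ.1 * gE μ * e)
                  = x * (e * ((gE ν * EA μ.1) * gE μ) * e) := by noncomm_ring
              _ = x * (e * (gE ν * gE μ) * e) := by rw [hgνi]
      · have h0 : gE ν * gE μ = 0 := by
          calc gE ν * gE μ = (gE ν * EA ν.2) * (EA μ.1 * gE μ) := by
                rw [hgEr ν hν, hgEl μ hμ]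
          _ = gE ν * (EA ν.2 * EA μ.1) * gE μ := by noncomm_ring
          _ = 0 := by rw [(hW.2.1 ν.2 μ.1 (fun hc => hμν hc.symm)).1]; simp
        have hz : EA μ.1 * (gE μ * x * gE ν) * EA ν.2 = gE μ * x * gE ν := by
          calc EA μ.1 * (gE μ * x * gE ν) * EA ν.2
              = (EA μ.1 * gE μ) * x * (gE ν * EA ν.2) := by noncomm_ring
          _ = gE μ * x * gE ν := by rw [hgEl μ hμ, hgEr ν hν]
        rw [K2off μ.1 ν.2 _ hμν hz, h0]
        simp
    have hpsi_eAe : ∀ x : A, e * x * e = x → ψ x = Ψ₀ x := by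
      intro x hx
      have hxrep : x = ∑ μ ∈ sE, ∑ ν ∈ sE, gE μ * x * gE ν := by
        calc x = e * x * e := hx.symm
        _ = (∑ μ ∈ sE, gE μ) * x * (∑ ν ∈ sE, gE ν) := by rw [← hgEsum]
        _ = ∑ μ ∈ sE, (gE μ * x * (∑ ν ∈ sE, gE ν)) := by rw [Finset.sum_mul, Finset.sum_mul]
        _ = ∑ μ ∈ sE, ∑ ν ∈ sE, gE μ * x * gE ν :=
            Finset.sum_congr rfl fun μ _ => Finset.mul_sum _ _ _
      calc ψ x = ∑ μ ∈ sE, ∑ ν ∈ sE, ψ (gE μ * x * gE ν) := by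
            conv_lhs => rw [hxrep]
            rw [map_sum]
            exact Finset.sum_congr rfl fun μ _ => map_sum ψ _ _
      _ = ∑ μ ∈ sE, ∑ ν ∈ sE, Ψ₀ (x * (e * (gE ν * gE μ) * e)) :=
            Finset.sum_congr rfl fun μ hμ => Finset.sum_congr rfl fun ν hν =>
              hterm x hx μ hμ ν hν
      _ = Ψ₀ (∑ μ ∈ sE, ∑ ν ∈ sE, x * (e * (gE ν * gE μ) * e)) := by
            rw [map_sum]
            exact Finset.sum_congr rfl fun μ _ => (map_sum Ψ₀ _ _).symm
      _ = Ψ₀ (x * (e * ((∑ ν ∈ sE, gE ν) * (∑ μ ∈ sE, gE μ)) * e)) := by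
            congr 1
            simp only [Finset.mul_sum, Finset.sum_mul]
      _ = Ψ₀ (x * (e * (e * e) * e)) := by rw [← hgEsum]
      _ = Ψ₀ x := by
            have hee : e * e = e := he
            rw [show e * (e * e) * e = e by simp only [hee], corner_right he hx]
    refine ⟨ψ, hSLF, ?_⟩
    apply LinearMap.ext
    rintro ⟨X, hX⟩
    rw [hT]
    have hXc : p * X * p = X := hX
    have hEp : (Matrix.diagonal fun _ : Fin n => e) * p = p := corner_left hEi hpE
    have hpE2 : p * (Matrix.diagonal fun _ : Fin n => e) = p := corner_right hEi hpE
    have hXM : (Matrix.diagonal fun _ : Fin n => e) * X *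
        (Matrix.diagonal fun _ : Fin n => e) = X := by
      conv_lhs => rw [← hXc]
      calc (Matrix.diagonal fun _ : Fin n => e) * (p * X * p) *
          (Matrix.diagonal fun _ : Fin n => e)
          = ((Matrix.diagonal fun _ : Fin n => e) * p) * X *
            (p * (Matrix.diagonal fun _ : Fin n => e)) := by noncomm_ring
      _ = p * X * p := by rw [hEp, hpE2]
      _ = X := hXc
    calc (∑ k, ψ ((⟨X, hX⟩ : ↥(subCorner (Matrix (Fin n) (Fin n) A) p p)).1 k k))
        = ∑ k, Ψ₀ (X k k) := Finset.sum_congr rfl fun k _ =>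
          hpsi_eAe _ (diag_corner_entry hXM k k)
    _ = ∑ k, (phiM hpp mE aM bM φ) (Matrix.single i0 i0 (X k k)) :=
          Finset.sum_congr rfl fun k _ => rfl
    _ = φ ⟨X, hX⟩ := trace_phiM he hpp hpE habM φ hφ i0 X hX
end
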